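/- arXiv:1807.10456 — 3 statements merged into one kernel-verified Lean document; each statement's English description precedes it below -/
import Mathlib

section
/- If H is a linear 3-uniform hypergraph with m edges, then the minimum cardinality of a feedback vertex set of H is at most m/3. -/
/-- A hypergraph: a finite vertex set and a finite set of edges, each edge a
finset of vertices contained in the vertex set. -/
structure FinHypergraph (α : Type*) where
  verts : Finset α
  edges : Finset (Finset α)
  mem_verts : ∀ e ∈ edges, ∀ v ∈ e, v ∈ verts

namespace FinHypergraph

variable {α : Type*} [DecidableEq α]

/-- A cycle of length `k ≥ 2`: distinct vertices `v i`, distinct edges `e i`,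
with `{v i, v (i+1)} ⊆ e i` (indices mod `k`). -/
def IsCycle (H : FinHypergraph α) (k : ℕ) (v : ZMod k → α) (e : ZMod k → Finset α) : Prop :=
  2 ≤ k ∧ Function.Injective v ∧ Function.Injective e ∧
    (∀ i, e i ∈ H.edges) ∧ ∀ i, v i ∈ e i ∧ v (i + 1) ∈ e i

def HasCycle (H : FinHypergraph α) : Prop := ∃ k v e, H.IsCycle k v e

/-- There is a cycle using the edge `f`. -/
def HasCycleThrough (H : FinHypergraph α) (f : Finset α) : Prop :=
  ∃ k v e, H.IsCycle k v e ∧ ∃ i, e i = f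

/-- Delete a set of vertices together with all edges meeting it. -/
def delV (H : FinHypergraph α) (S : Finset α) : FinHypergraph α where
  verts := H.verts \ S
  edges := H.edges.filter fun e => ∀ x ∈ e, x ∉ S
  mem_verts := by
    intro e he x hx
    simp only [Finset.mem_filter] at he
    exact Finset.mem_sdiff.mpr ⟨H.mem_verts e he.1 x hx, he.2 x hx⟩

/-- Delete a set of edges (keeping all vertices). -/
def delE (H : FinHypergraph α) (A : Finset (Finset α)) : FinHypergraph α where
  verts := H.verts
  edges := H.edges \ A
  mem_verts := fun e he => H.mem_verts e (Finset.mem_sdiff.mp he).1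

/-- A feedback vertex set. -/
def IsFVS (H : FinHypergraph α) (S : Finset α) : Prop :=
  S ⊆ H.verts ∧ ¬ (H.delV S).HasCycle

/-- τ_c : minimum cardinality of a feedback vertex set. -/
noncomputable def fvsNum (H : FinHypergraph α) : ℕ :=
  sInf {n | ∃ S, H.IsFVS S ∧ S.card = n}

/-- A feedback edge set. -/
def IsFES (H : FinHypergraph α) (A : Finset (Finset α)) : Prop :=
  A ⊆ H.edges ∧ ¬ (H.delE A).HasCycle

/-- τ_c' : minimum cardinality of a feedback edge set. -/
noncomputable def fesNum (H : FinHypergraph α) : ℕ :=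
  sInf {n | ∃ A, H.IsFES A ∧ A.card = n}

/-- Two vertices are connected by an alternating vertex-edge walk. -/
def connRel (H : FinHypergraph α) (x y : α) : Prop :=
  Relation.ReflTransGen (fun a b => ∃ e ∈ H.edges, a ∈ e ∧ b ∈ e) x y

def Connected (H : FinHypergraph α) : Prop :=
  H.verts.Nonempty ∧ ∀ x ∈ H.verts, ∀ y ∈ H.verts, H.connRel x y

/-- The number of connected components. -/
noncomputable def numComponents (H : FinHypergraph α) : ℕ :=
  Nat.card (Quot fun x y : {a // a ∈ H.verts} => H.connRel x y)

/-- Every edge has exactly 3 vertices. -/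
def TriUniform (H : FinHypergraph α) : Prop := ∀ e ∈ H.edges, e.card = 3

/-- Any two distinct edges share at most one vertex. -/
def Linear (H : FinHypergraph α) : Prop :=
  ∀ e ∈ H.edges, ∀ f ∈ H.edges, e ≠ f → (e ∩ f).card ≤ 1

/-- The degree of a vertex: the number of edges containing it. -/
def degree (H : FinHypergraph α) (v : α) : ℕ :=
  (H.edges.filter fun e => v ∈ e).card

end FinHypergraph

namespace FinHypergraph

variable {α : Type*} [DecidableEq α]

-- ============ infrastructure ============

lemma mem_delV_edges {H : FinHypergraph α} {S : Finset α} {e : Finset α} :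
    e ∈ (H.delV S).edges ↔ e ∈ H.edges ∧ ∀ x ∈ e, x ∉ S := Finset.mem_filter

lemma mem_delE_edges {H : FinHypergraph α} {A : Finset (Finset α)} {e : Finset α} :
    e ∈ (H.delE A).edges ↔ e ∈ H.edges ∧ e ∉ A := Finset.mem_sdiff

lemma hasCycle_mono {H₁ H₂ : FinHypergraph α} (h : H₁.edges ⊆ H₂.edges) :
    H₁.HasCycle → H₂.HasCycle := by
  rintro ⟨k, v, e, hk, hv, he, hmem, hinc⟩
  exact ⟨k, v, e, hk, hv, he, fun i => h (hmem i), hinc⟩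

lemma degree_mono {H₁ H₂ : FinHypergraph α} (h : H₁.edges ⊆ H₂.edges) (z : α) :
    H₁.degree z ≤ H₂.degree z :=
  Finset.card_le_card (Finset.filter_subset_filter _ h)

lemma triUniform_anti {H₁ H₂ : FinHypergraph α} (h : H₁.edges ⊆ H₂.edges)
    (hu : H₂.TriUniform) : H₁.TriUniform := fun e he => hu e (h he)

lemma linear_anti {H₁ H₂ : FinHypergraph α} (h : H₁.edges ⊆ H₂.edges)
    (hl : H₂.Linear) : H₁.Linear := fun e he f hf => hl e (h he) f (h hf)

lemma delV_edges_subset (H : FinHypergraph α) (S : Finset α) : (H.delV S).edges ⊆ H.edges :=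
  Finset.filter_subset _ _

lemma delE_edges_subset (H : FinHypergraph α) (A : Finset (Finset α)) : (H.delE A).edges ⊆ H.edges :=
  Finset.sdiff_subset

lemma isFVS_empty {H : FinHypergraph α} (h : ¬ H.HasCycle) : H.IsFVS ∅ := by
  refine ⟨Finset.empty_subset _, fun hc => h (hasCycle_mono (delV_edges_subset H ∅) hc)⟩

lemma fvs_delV_union {H : FinHypergraph α} {X S : Finset α} (hX : X ⊆ H.verts)
    (h : (H.delV X).IsFVS S) : H.IsFVS (X ∪ S) := by
  constructor
  · intro x hx
    rcases Finset.mem_union.mp hx with h1 | h1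
    · exact hX h1
    · exact (Finset.mem_sdiff.mp (h.1 h1)).1
  · intro hc
    apply h.2
    apply hasCycle_mono (H₁ := H.delV (X ∪ S)) _ hc
    intro e he
    rw [mem_delV_edges] at he
    rw [mem_delV_edges, mem_delV_edges]
    exact ⟨⟨he.1, fun x hx => fun hxX => he.2 x hx (Finset.mem_union_left _ hxX)⟩,
      fun x hx hxS => he.2 x hx (Finset.mem_union_right _ hxS)⟩

lemma fvs_of_prune {H : FinHypergraph α} {Q : Finset (Finset α)}
    (hval : ∀ q ∈ Q, (q.filter fun z => 2 ≤ H.degree z).card ≤ 1)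
    {S : Finset α} (h : (H.delE Q).IsFVS S) : H.IsFVS S := by
  refine ⟨h.1, ?_⟩
  rintro ⟨k, v, e, hk, hv, he, hmem, hinc⟩
  haveI : NeZero k := ⟨by omega⟩
  haveI : Fact (1 < k) := ⟨by omega⟩
  by_cases hq : ∃ i, e i ∈ Q
  · rcases hq with ⟨i, hiQ⟩
    have h10 : (1 : ZMod k) ≠ 0 := by
      intro h0
      have := congrArg ZMod.val h0
      rw [ZMod.val_one, ZMod.val_zero] at this
      omega
    have hne : v i ≠ v (i+1) := by
      intro hEq
      have := hv hEq
      have : (0 : ZMod k) = 1 := by linear_combination this - i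
      exact h10 this.symm
    have hdeg : ∀ j : ZMod k, 2 ≤ H.degree (v j) := by
      intro j
      have h1 : v j ∈ e j := (hinc j).1
      have h2 : v j ∈ e (j-1) := by
        have := (hinc (j-1)).2
        rwa [sub_add_cancel] at this
      have hne2 : e (j-1) ≠ e j := by
        intro hEq
        have := he hEq
        have h1' : (1 : ZMod k) = 0 := by linear_combination j - this - 1
        exact h10 h1'
      have hsub : ({e (j-1), e j} : Finset (Finset α)) ⊆ H.edges.filter (fun g => v j ∈ g) := by
        intro g hg
        rcases Finset.mem_insert.mp hg with rfl | hg
        · exact Finset.mem_filter.mpr ⟨(mem_delV_edges.mp (hmem (j-1))).1, h2⟩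
        · rw [Finset.mem_singleton] at hg; subst hg
          exact Finset.mem_filter.mpr ⟨(mem_delV_edges.mp (hmem j)).1, h1⟩
      have := Finset.card_le_card hsub
      rwa [Finset.card_pair hne2] at this
    have hsub2 : ({v i, v (i+1)} : Finset α) ⊆ (e i).filter (fun z => 2 ≤ H.degree z) := by
      intro z hz
      rcases Finset.mem_insert.mp hz with rfl | hz
      · exact Finset.mem_filter.mpr ⟨(hinc i).1, hdeg i⟩
      · rw [Finset.mem_singleton] at hz; subst hz
        exact Finset.mem_filter.mpr ⟨(hinc i).2, hdeg (i+1)⟩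
    have h2le := Finset.card_le_card hsub2
    rw [Finset.card_pair hne] at h2le
    have := hval (e i) hiQ
    omega
  · push_neg at hq
    apply h.2
    refine ⟨k, v, e, hk, hv, he, ?_, hinc⟩
    intro i
    have := hmem i
    rw [mem_delV_edges] at this
    rw [mem_delV_edges]
    exact ⟨mem_delE_edges.mpr ⟨this.1, hq i⟩, this.2⟩

lemma card_delV_le {H : FinHypergraph α} {X : Finset α} {D : Finset (Finset α)}
    (hD : D ⊆ H.edges) (hmeet : ∀ d ∈ D, ∃ x ∈ d, x ∈ X) :
    (H.delV X).edges.card + D.card ≤ H.edges.card := by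
  have hdisj : Disjoint (H.delV X).edges D := by
    rw [Finset.disjoint_left]; intro a ha haD
    rcases hmeet a haD with ⟨x, hx1, hx2⟩
    exact (mem_delV_edges.mp ha).2 x hx1 hx2
  calc (H.delV X).edges.card + D.card = ((H.delV X).edges ∪ D).card :=
        (Finset.card_union_of_disjoint hdisj).symm
  _ ≤ H.edges.card := Finset.card_le_card (Finset.union_subset (delV_edges_subset H X) hD)

lemma card_delE_eq {H : FinHypergraph α} {Q : Finset (Finset α)} (hQ : Q ⊆ H.edges) :
    (H.delE Q).edges.card + Q.card = H.edges.card :=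
  Finset.card_sdiff_add_card_eq_card hQ

lemma prune_card {H : FinHypergraph α} {q : Finset α} {t : α}
    (h : ∀ z ∈ q, z ≠ t → H.degree z ≤ 1) :
    (q.filter fun z => 2 ≤ H.degree z).card ≤ 1 := by
  have hsub : q.filter (fun z => 2 ≤ H.degree z) ⊆ {t} := by
    intro z hz
    simp only [Finset.mem_filter] at hz
    simp only [Finset.mem_singleton]
    by_contra hne
    have := h z hz.1 hne
    omega
  simpa using Finset.card_le_card hsub

lemma deg_le_one {H₀ H : FinHypergraph α} (hsub : H₀.edges ⊆ H.edges) {z : α} {g g' : Finset α}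
    (pair : ∀ h ∈ H.edges, z ∈ h → h = g ∨ h = g') (hdead : g ∉ H₀.edges) :
    H₀.degree z ≤ 1 := by
  have hs : H₀.edges.filter (fun e => z ∈ e) ⊆ {g'} := by
    intro h hh
    simp only [Finset.mem_filter] at hh
    rcases pair h (hsub hh.1) hh.2 with rfl | rfl
    · exact absurd hh.1 hdead
    · simp
  simpa [degree] using Finset.card_le_card hs

lemma pair_eq {H : FinHypergraph α} {z : α} (hdeg : H.degree z ≤ 2) {g g' : Finset α}
    (hg : g ∈ H.edges) (hg' : g' ∈ H.edges) (hzg : z ∈ g) (hzg' : z ∈ g') (hne : g ≠ g') :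
    ∀ h ∈ H.edges, z ∈ h → h = g ∨ h = g' := by
  intro h hh hzh
  by_contra hcon
  push_neg at hcon
  have hsub : ({g, g', h} : Finset (Finset α)) ⊆ H.edges.filter (fun e => z ∈ e) := by
    intro a ha
    simp only [Finset.mem_insert, Finset.mem_singleton] at ha
    rcases ha with rfl | rfl | rfl
    · exact Finset.mem_filter.mpr ⟨hg, hzg⟩
    · exact Finset.mem_filter.mpr ⟨hg', hzg'⟩
    · exact Finset.mem_filter.mpr ⟨hh, hzh⟩
  have h3 : ({g, g', h} : Finset (Finset α)).card = 3 := by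
    rw [Finset.card_insert_of_notMem, Finset.card_insert_of_notMem, Finset.card_singleton]
    · simp only [Finset.mem_singleton]
      exact fun hEq => hcon.2 hEq.symm
    · simp only [Finset.mem_insert, Finset.mem_singleton]
      push_neg
      exact ⟨hne, fun hEq => hcon.1 hEq.symm⟩
  have := Finset.card_le_card hsub
  rw [h3] at this
  have : 3 ≤ H.degree z := this
  omega

lemma exists_partner {H : FinHypergraph α} {z : α} (hdeg : H.degree z = 2) {g : Finset α}
    (hg : g ∈ H.edges) (hzg : z ∈ g) :
    ∃ g', g' ∈ H.edges ∧ z ∈ g' ∧ g' ≠ g ∧ ∀ h ∈ H.edges, z ∈ h → h = g ∨ h = g' := by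
  have hgf : g ∈ H.edges.filter (fun e => z ∈ e) := Finset.mem_filter.mpr ⟨hg, hzg⟩
  have hcard : 1 < (H.edges.filter (fun e => z ∈ e)).card := by
    have : (H.edges.filter (fun e => z ∈ e)).card = H.degree z := rfl
    omega
  obtain ⟨g', hg'f, hne⟩ := Finset.exists_mem_ne hcard g
  simp only [Finset.mem_filter] at hg'f
  exact ⟨g', hg'f.1, hg'f.2, hne, pair_eq (le_of_eq hdeg) hg hg'f.1 hzg hg'f.2 (Ne.symm hne)⟩

lemma bundle {H : FinHypergraph α}
    {X : Finset α} {D Q1 Q2 : Finset (Finset α)} (t : ℕ)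
    (hX : X ⊆ H.verts)
    (hD : D ⊆ H.edges) (hmeet : ∀ d ∈ D, ∃ x ∈ d, x ∈ X) (hDcard : 2 * t ≤ D.card)
    (hQ1 : Q1 ⊆ (H.delV X).edges)
    (hQ1val : ∀ q ∈ Q1, (q.filter fun z => 2 ≤ (H.delV X).degree z).card ≤ 1)
    (hQ2 : Q2 ⊆ ((H.delV X).delE Q1).edges)
    (hQ2val : ∀ q ∈ Q2, (q.filter fun z => 2 ≤ ((H.delV X).delE Q1).degree z).card ≤ 1)
    (hQcard : t ≤ Q1.card + Q2.card)
    (hXcard : X.card ≤ t) (ht : 1 ≤ t)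
    (IH : ∀ H' : FinHypergraph α, H'.edges ⊆ H.edges → H'.edges.card + 1 ≤ H.edges.card →
        ∃ S, H'.IsFVS S ∧ 3 * S.card ≤ H'.edges.card) :
    ∃ S, H.IsFVS S ∧ 3 * S.card ≤ H.edges.card := by
  set H1 := H.delV X with hH1
  set H2 := H1.delE Q1 with hH2
  set H3 := H2.delE Q2 with hH3
  have c1 : H1.edges.card + D.card ≤ H.edges.card := card_delV_le hD hmeet
  have c2 : H2.edges.card + Q1.card = H1.edges.card := card_delE_eq hQ1
  have c3 : H3.edges.card + Q2.card = H2.edges.card := card_delE_eq hQ2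
  have hc : H3.edges.card + 3 * t ≤ H.edges.card := by omega
  have hsub3 : H3.edges ⊆ H.edges := by
    refine (delE_edges_subset _ _).trans ((delE_edges_subset _ _).trans (delV_edges_subset _ _))
  obtain ⟨S', hS', hS'c⟩ := IH H3 hsub3 (by omega)
  have hS'2 : H2.IsFVS S' := fvs_of_prune hQ2val hS'
  have hS'1 : H1.IsFVS S' := fvs_of_prune hQ1val hS'2
  refine ⟨X ∪ S', fvs_delV_union hX hS'1, ?_⟩
  have := Finset.card_union_le X S'
  omega

lemma inter_unique {H : FinHypergraph α} (hl : H.Linear) {e f : Finset α} {x y : α}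
    (he : e ∈ H.edges) (hf : f ∈ H.edges) (hne : e ≠ f)
    (hxe : x ∈ e) (hxf : x ∈ f) (hye : y ∈ e) (hyf : y ∈ f) : x = y := by
  by_contra hxy
  have hsub : ({x, y} : Finset α) ⊆ e ∩ f := by
    intro a ha
    rcases Finset.mem_insert.mp ha with rfl | ha
    · exact Finset.mem_inter.mpr ⟨hxe, hxf⟩
    · rw [Finset.mem_singleton] at ha; subst ha
      exact Finset.mem_inter.mpr ⟨hye, hyf⟩
  have := Finset.card_le_card hsub
  rw [Finset.card_pair hxy] at this
  have := hl e he f hf hne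
  omega

lemma third_exists {e : Finset α} (h3 : e.card = 3) {x y : α} (hx : x ∈ e) (hy : y ∈ e)
    (hxy : x ≠ y) :
    ∃ t, t ∈ e ∧ t ≠ x ∧ t ≠ y ∧ ∀ z ∈ e, z = x ∨ z = y ∨ z = t := by
  obtain ⟨a, b, c, hab, hac, hbc, rfl⟩ := Finset.card_eq_three.mp h3
  simp only [Finset.mem_insert, Finset.mem_singleton] at hx hy
  rcases hx with rfl | rfl | rfl <;> rcases hy with rfl | rfl | rfl <;>
    first
      | exact absurd rfl hxy
      | exact ⟨c, by simp, by tauto, by tauto, by intro z hz; simp at hz; tauto⟩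
      | exact ⟨b, by simp, by tauto, by tauto, by intro z hz; simp at hz; tauto⟩
      | exact ⟨a, by simp, by tauto, by tauto, by intro z hz; simp at hz; tauto⟩

/-- Package of a minimum-length cycle in `H`, presented with `ℕ`-indexed periodic
functions. -/
structure Pkg (H : FinHypergraph α) where
  k : ℕ
  V : ℕ → α
  E : ℕ → Finset α
  hk : 3 ≤ k
  hE : ∀ s, E s ∈ H.edges
  hV : ∀ s, V s ∈ E s
  hV1 : ∀ s, V (s + 1) ∈ E s
  perV : ∀ s, V (s + k) = V s
  perE : ∀ s, E (s + k) = E s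
  injV : ∀ s u, V s = V u → s % k = u % k
  injE : ∀ s u, E s = E u → s % k = u % k
  hmin : ∀ c, 2 ≤ c → c < k → ∀ v e, ¬ H.IsCycle c v e

namespace Pkg

variable {H : FinHypergraph α} (P : Pkg H)

lemma modlt {a b : ℕ} (ha : a < P.k) (hb : b < P.k) (h : a % P.k = b % P.k) : a = b := by
  rwa [Nat.mod_eq_of_lt ha, Nat.mod_eq_of_lt hb] at h

lemma Vmod : ∀ s, P.V s = P.V (s % P.k) := by
  intro s
  induction s using Nat.strong_induction_on with
  | _ s ih =>
  rcases lt_or_ge s P.k with h | h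
  · rw [Nat.mod_eq_of_lt h]
  · have h1 : s = (s - P.k) + P.k := by omega
    have h2 : (s - P.k) % P.k = s % P.k := by
      conv_rhs => rw [h1]
      rw [Nat.add_mod_right]
    have h3 : P.V s = P.V (s - P.k) := by
      conv_lhs => rw [h1]
      exact P.perV (s - P.k)
    rw [h3, ih (s - P.k) (by have := P.hk; omega), h2]

lemma Emod : ∀ s, P.E s = P.E (s % P.k) := by
  intro s
  induction s using Nat.strong_induction_on with
  | _ s ih =>
  rcases lt_or_ge s P.k with h | h
  · rw [Nat.mod_eq_of_lt h]
  · have h1 : s = (s - P.k) + P.k := by omega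
    have h2 : (s - P.k) % P.k = s % P.k := by
      conv_rhs => rw [h1]
      rw [Nat.add_mod_right]
    have h3 : P.E s = P.E (s - P.k) := by
      conv_lhs => rw [h1]
      exact P.perE (s - P.k)
    rw [h3, ih (s - P.k) (by have := P.hk; omega), h2]

lemma Vcongr {s u : ℕ} (h : s % P.k = u % P.k) : P.V s = P.V u := by
  rw [P.Vmod s, P.Vmod u, h]

lemma Econgr {s u : ℕ} (h : s % P.k = u % P.k) : P.E s = P.E u := by
  rw [P.Emod s, P.Emod u, h]

lemma kpos : 0 < P.k := by have := P.hk; omega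

lemma add_mod_ne (a d : ℕ) (h1 : 1 ≤ d) (h2 : d < P.k) : a % P.k ≠ (a + d) % P.k := by
  intro h
  have hx : a % P.k < P.k := Nat.mod_lt _ P.kpos
  rw [Nat.add_mod, Nat.mod_eq_of_lt h2] at h
  rcases Nat.lt_or_ge (a % P.k + d) P.k with hlt | hge
  · rw [Nat.mod_eq_of_lt hlt] at h; omega
  · have he : (a % P.k + d) % P.k = a % P.k + d - P.k := by
      rw [Nat.mod_eq_sub_mod hge, Nat.mod_eq_of_lt (by omega)]
    rw [he] at h; omega

lemma succ_mod_ne (s : ℕ) : s % P.k ≠ (s + 1) % P.k :=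
  P.add_mod_ne s 1 le_rfl (by have := P.hk; omega)

lemma EneAdd (a d : ℕ) (h1 : 1 ≤ d) (h2 : d < P.k) : P.E a ≠ P.E (a + d) := by
  intro h
  exact P.add_mod_ne a d h1 h2 (P.injE a (a + d) h)

lemma VneAdd (a d : ℕ) (h1 : 1 ≤ d) (h2 : d < P.k) : P.V a ≠ P.V (a + d) := by
  intro h
  exact P.add_mod_ne a d h1 h2 (P.injV a (a + d) h)

lemma EsuccNe (s : ℕ) : P.E s ≠ P.E (s + 1) := by
  intro h
  exact P.succ_mod_ne s (P.injE s (s + 1) h)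

lemma VsuccNe (s : ℕ) : P.V s ≠ P.V (s + 1) := by
  intro h
  exact P.succ_mod_ne s (P.injV s (s + 1) h)

lemma no_cycle_lt (c : ℕ) (hc2 : 2 ≤ c) (hck : c < P.k)
    (V' : ℕ → α) (E' : ℕ → Finset α)
    (hE' : ∀ s < c, E' s ∈ H.edges)
    (hVE : ∀ s < c, V' s ∈ E' s)
    (hVE1 : ∀ s, s + 1 < c → V' (s + 1) ∈ E' s)
    (hwrap : V' 0 ∈ E' (c - 1))
    (hVinj : ∀ s < c, ∀ u < c, V' s = V' u → s = u)
    (hEinj : ∀ s < c, ∀ u < c, E' s = E' u → s = u) : False := by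
  haveI : NeZero c := ⟨by omega⟩
  haveI : Fact (1 < c) := ⟨by omega⟩
  apply P.hmin c hc2 hck (fun i : ZMod c => V' i.val) (fun i : ZMod c => E' i.val)
  refine ⟨hc2, ?_, ?_, ?_, ?_⟩
  · intro i j hij
    exact ZMod.val_injective c (hVinj _ (ZMod.val_lt i) _ (ZMod.val_lt j) hij)
  · intro i j hij
    exact ZMod.val_injective c (hEinj _ (ZMod.val_lt i) _ (ZMod.val_lt j) hij)
  · intro i; exact hE' _ (ZMod.val_lt i)
  · intro i
    refine ⟨hVE _ (ZMod.val_lt i), ?_⟩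
    have hval : (i + 1).val = (i.val + 1) % c := by
      rw [ZMod.val_add, ZMod.val_one]
    show V' (i + 1).val ∈ E' i.val
    rw [hval]
    rcases Nat.lt_or_ge (i.val + 1) c with h | h
    · rw [Nat.mod_eq_of_lt h]
      exact hVE1 _ h
    · have h1 : i.val + 1 = c := by have := ZMod.val_lt i; omega
      have h2 : i.val = c - 1 := by omega
      rw [h1, Nat.mod_self, h2]
      exact hwrap


variable (hreg : ∀ e ∈ H.edges, ∀ z ∈ e, H.degree z = 2)

include hreg

lemma pairV (s : ℕ) :
    ∀ h ∈ H.edges, P.V (s + 1) ∈ h → h = P.E s ∨ h = P.E (s + 1) := by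
  have hdeg : H.degree (P.V (s + 1)) = 2 := hreg _ (P.hE s) _ (P.hV1 s)
  exact pair_eq (le_of_eq hdeg) (P.hE s) (P.hE (s + 1)) (P.hV1 s) (P.hV (s + 1)) (P.EsuccNe s)

lemma VnotinE (s j : ℕ) (h : P.V (s + 1) ∈ P.E j) :
    j % P.k = s % P.k ∨ j % P.k = (s + 1) % P.k := by
  rcases P.pairV hreg s (P.E j) (P.hE j) h with h1 | h1
  · exact Or.inl (P.injE j s h1)
  · exact Or.inr (P.injE j (s + 1) h1)

lemma no_chord (a d : ℕ) (y : α) (hd2 : 2 ≤ d) (hdk : d ≤ P.k - 2)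
    (hya : y ∈ P.E a) (hyd : y ∈ P.E (a + d)) : False := by
  have hk := P.hk
  have hEne : P.E a ≠ P.E (a + d) := P.EneAdd a d (by omega) (by omega)
  -- helper : if y = V (a+u) for some 1 ≤ u ≤ d then False
  have hyV : ∀ u, 1 ≤ u → u ≤ d → y ≠ P.V (a + u) := by
    intro u hu1 hud hEq
    have hmem1 : y ∈ P.E (a + u) := hEq ▸ P.hV (a + u)
    have hmem0 : y ∈ P.E (a + (u - 1)) := by
      have h1 : a + (u - 1) + 1 = a + u := by omega
      have := P.hV1 (a + (u - 1))
      rw [h1] at this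
      exact hEq ▸ this
    have hpairu : ∀ h ∈ H.edges, y ∈ h → h = P.E (a + (u - 1)) ∨ h = P.E (a + u) := by
      have h1 : a + (u - 1) + 1 = a + u := by omega
      have := P.pairV hreg (a + (u - 1))
      rw [h1] at this
      intro h hh hy
      exact this h hh (hEq ▸ hy)
    rcases hpairu (P.E a) (P.hE a) hya with h1 | h1
    · -- E a = E (a + (u-1)) : forces u = 1
      have hmod := P.injE a (a + (u - 1)) h1
      have hu : u = 1 := by
        by_contra hu
        exact P.add_mod_ne a (u - 1) (by omega) (by omega) hmod
      subst hu
      rcases hpairu (P.E (a + d)) (P.hE (a + d)) hyd with h2 | h2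
      · simp only [Nat.sub_self, Nat.add_zero] at h2
        exact hEne h2.symm
      · have hmod2 := P.injE (a + d) (a + 1) h2
        have heq : a + 1 + (d - 1) = a + d := by omega
        exact P.add_mod_ne (a + 1) (d - 1) (by omega) (by omega) (by rw [heq]; exact hmod2.symm)
    · -- E a = E (a + u) : contradiction
      have := P.injE a (a + u) h1
      exact P.add_mod_ne a u (by omega) (by omega) this
  -- now build the shorter cycle of length d + 1
  apply P.no_cycle_lt (d + 1) (by omega) (by omega)
    (fun s => if s = 0 then y else P.V (a + s)) (fun s => P.E (a + s))
  · intro s _; exact P.hE (a + s)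
  · intro s hs
    by_cases h0 : s = 0
    · subst h0; simpa using hya
    · simp only [h0, if_false]
      exact P.hV (a + s)
  · intro s hs
    have h0 : ¬ (s + 1 = 0) := by omega
    simp only [h0, if_false]
    exact P.hV1 (a + s)
  · simpa using hyd
  · intro s hs u hu hVeq
    by_cases h0 : s = 0 <;> by_cases h1 : u = 0
    · omega
    · subst h0
      rw [if_pos rfl, if_neg h1] at hVeq
      exact absurd hVeq (hyV u (by omega) (by omega))
    · subst h1
      rw [if_neg h0, if_pos rfl] at hVeq
      exact absurd hVeq.symm (hyV s (by omega) (by omega))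
    · rw [if_neg h0, if_neg h1] at hVeq
      have hmod := P.injV (a + s) (a + u) hVeq
      rcases Nat.lt_trichotomy s u with h | h | h
      · have heq : a + s + (u - s) = a + u := by omega
        exact absurd (by rw [heq]; exact hmod) (P.add_mod_ne (a + s) (u - s) (by omega) (by omega))
      · exact h
      · have heq : a + u + (s - u) = a + s := by omega
        exact absurd (by rw [heq]; exact hmod.symm) (P.add_mod_ne (a + u) (s - u) (by omega) (by omega))
  · intro s hs u hu hEeq
    have hmod := P.injE (a + s) (a + u) hEeq
    rcases Nat.lt_trichotomy s u with h | h | h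
    · have heq : a + s + (u - s) = a + u := by omega
      exact absurd (by rw [heq]; exact hmod) (P.add_mod_ne (a + s) (u - s) (by omega) (by omega))
    · exact h
    · have heq : a + u + (s - u) = a + s := by omega
      exact absurd (by rw [heq]; exact hmod.symm) (P.add_mod_ne (a + u) (s - u) (by omega) (by omega))

lemma no_attach (a d : ℕ) (f : Finset α) (y1 y2 : α)
    (hf : f ∈ H.edges) (hfC : ∀ j, f ≠ P.E j)
    (hd1 : 1 ≤ d) (hdk : d ≤ P.k - 3)
    (hy1f : y1 ∈ f) (hy1a : y1 ∈ P.E a) (hy2f : y2 ∈ f) (hy2b : y2 ∈ P.E (a + d)) : False := by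
  have hk := P.hk
  have hfa : f ≠ P.E a := hfC a
  have hfb : f ≠ P.E (a + d) := hfC (a + d)
  have hEne : P.E a ≠ P.E (a + d) := P.EneAdd a d (by omega) (by omega)
  have hy12 : y1 ≠ y2 := by
    intro hEq
    subst hEq
    have hpair : ∀ h ∈ H.edges, y1 ∈ h → h = f ∨ h = P.E a :=
      pair_eq (le_of_eq (hreg f hf y1 hy1f)) hf (P.hE a) hy1f hy1a hfa
    rcases hpair (P.E (a + d)) (P.hE (a + d)) hy2b with h1 | h1
    · exact hfb h1.symm
    · exact hEne h1.symm
  -- neither y1 nor y2 equals any middle vertex, since their second edge is f ∉ C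
  have hyV : ∀ y, y ∈ f → ∀ u, 1 ≤ u → u ≤ d → y ∈ P.E a ∨ y ∈ P.E (a+d) → y ≠ P.V (a + u) := by
    intro y hyf u hu1 hud hyab hEq
    have hmem1 : y ∈ P.E (a + u) := hEq ▸ P.hV (a + u)
    have hpairu : ∀ h ∈ H.edges, y ∈ h → h = P.E (a + (u - 1)) ∨ h = P.E (a + u) := by
      have h1 : a + (u - 1) + 1 = a + u := by omega
      have := P.pairV hreg (a + (u - 1))
      rw [h1] at this
      intro h hh hy
      exact this h hh (hEq ▸ hy)
    rcases hpairu f hf hyf with h1 | h1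
    · exact hfC _ h1
    · exact hfC _ h1
  apply P.no_cycle_lt (d + 2) (by omega) (by omega)
    (fun s => if s = 0 then y1 else if s = d + 1 then y2 else P.V (a + s))
    (fun s => if s = d + 1 then f else P.E (a + s))
  · intro s _
    by_cases h : s = d + 1
    · simpa [h] using hf
    · simp only [h, if_false]; exact P.hE (a + s)
  · intro s hs
    by_cases h0 : s = 0
    · subst h0
      have : ¬ (0 = d + 1) := by omega
      simp only [if_pos rfl, this, if_false]
      exact hy1a
    · by_cases h1 : s = d + 1
      · subst h1
        simp only [if_pos rfl, h0, if_false]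
        exact hy2f
      · simp only [h0, h1, if_false]
        exact P.hV (a + s)
  · intro s hs
    have h0 : ¬ (s + 1 = 0) := by omega
    by_cases h1 : s + 1 = d + 1
    · have hsd : s = d := by omega
      subst hsd
      have h2 : ¬ (s = s + 1) := by omega
      simp only [h0, if_false, if_pos rfl, h2]
      exact hy2b
    · have h2 : ¬ (s = d + 1) := by omega
      simp only [h0, h1, h2, if_false]
      exact P.hV1 (a + s)
  · have h1 : d + 2 - 1 = d + 1 := by omega
    rw [h1]
    simp only [if_pos rfl]
    exact hy1f
  · intro s hs u hu hVeq
    have hmid : ∀ x w, 1 ≤ x → x ≤ d → 1 ≤ w → w ≤ d → P.V (a + x) = P.V (a + w) → x = w := by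
      intro x w hx1 hx2 hw1 hw2 hVeq2
      have hmod := P.injV (a + x) (a + w) hVeq2
      rcases Nat.lt_trichotomy x w with h | h | h
      · have heq : a + x + (w - x) = a + w := by omega
        exact absurd (by rw [heq]; exact hmod) (P.add_mod_ne (a + x) (w - x) (by omega) (by omega))
      · exact h
      · have heq : a + w + (x - w) = a + x := by omega
        exact absurd (by rw [heq]; exact hmod.symm) (P.add_mod_ne (a + w) (x - w) (by omega) (by omega))
    split_ifs at hVeq with c1 c2 c3 c4 c5 c6 c7 c8
    all_goals first
      | omega
      | (exact absurd hVeq hy12)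
      | (exact absurd hVeq.symm hy12)
      | (exact absurd hVeq (hyV y1 hy1f u (by omega) (by omega) (Or.inl hy1a)))
      | (exact absurd hVeq.symm (hyV y1 hy1f s (by omega) (by omega) (Or.inl hy1a)))
      | (exact absurd hVeq (hyV y2 hy2f u (by omega) (by omega) (Or.inr hy2b)))
      | (exact absurd hVeq.symm (hyV y2 hy2f s (by omega) (by omega) (Or.inr hy2b)))
      | (exact hmid s u (by omega) (by omega) (by omega) (by omega) hVeq)
  · intro s hs u hu hEeq
    have hmidE : ∀ x w, x ≤ d → w ≤ d → P.E (a + x) = P.E (a + w) → x = w := by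
      intro x w hx2 hw2 hEeq2
      have hmod := P.injE (a + x) (a + w) hEeq2
      rcases Nat.lt_trichotomy x w with h | h | h
      · have heq : a + x + (w - x) = a + w := by omega
        exact absurd (by rw [heq]; exact hmod) (P.add_mod_ne (a + x) (w - x) (by omega) (by omega))
      · exact h
      · have heq : a + w + (x - w) = a + x := by omega
        exact absurd (by rw [heq]; exact hmod.symm) (P.add_mod_ne (a + w) (x - w) (by omega) (by omega))
    split_ifs at hEeq with c1 c2 c3
    all_goals first
      | omega
      | (exact absurd hEeq (hfC (a + u)))
      | (exact absurd hEeq.symm (hfC (a + s)))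
      | (exact hmidE s u (by omega) (by omega) hEeq)

lemma TnotinE (hl : H.Linear) (s u : ℕ) (hs : s < P.k) (hu' : u < P.k) (t : α)
    (htE : t ∈ P.E s) (htVs : t ≠ P.V s) (htVs1 : t ≠ P.V (s + 1)) (htu : t ∈ P.E u) :
    u = s := by
  have hk := P.hk
  by_contra hne
  rcases Nat.lt_trichotomy s u with hord | hord | hord
  · -- u > s
    have hd1 : 1 ≤ u - s := by omega
    rcases Nat.lt_or_ge (u - s) 2 with hdlt | hdge
    · have hu1 : u = s + 1 := by omega
      subst hu1
      exact htVs1 (inter_unique hl (P.hE s) (P.hE (s+1)) (P.EsuccNe s) htE htu (P.hV1 s)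
        (P.hV (s+1)))
    · rcases Nat.lt_or_ge (u - s) (P.k - 1) with hdk | hdk
      · exact P.no_chord hreg s (u - s) t hdge (by omega) htE
          (by rw [show s + (u - s) = u by omega]; exact htu)
      · have hs0 : s = 0 := by omega
        have huk : u = P.k - 1 := by omega
        subst hs0; subst huk
        have h1 : (P.k - 1) + 1 = P.k := by omega
        have hVk : P.V P.k = P.V 0 := by have := P.perV 0; rwa [zero_add] at this
        have hVmem : P.V 0 ∈ P.E (P.k - 1) := by
          have := P.hV1 (P.k - 1); rw [h1, hVk] at this; exact this
        have hEne : P.E 0 ≠ P.E (P.k - 1) := by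
          have := P.EneAdd 0 (P.k - 1) (by omega) (by omega)
          rwa [zero_add] at this
        exact htVs (inter_unique hl (P.hE 0) (P.hE (P.k - 1)) hEne htE htu (P.hV 0) hVmem)
  · omega
  · -- u < s
    have hd1 : 1 ≤ s - u := by omega
    rcases Nat.lt_or_ge (s - u) 2 with hdlt | hdge
    · have hs1 : s = u + 1 := by omega
      subst hs1
      exact htVs (inter_unique hl (P.hE u) (P.hE (u+1)) (P.EsuccNe u) htu htE (P.hV1 u)
        (P.hV (u+1)))
    · rcases Nat.lt_or_ge (s - u) (P.k - 1) with hdk | hdk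
      · exact P.no_chord hreg u (s - u) t hdge (by omega) htu
          (by rw [show u + (s - u) = s by omega]; exact htE)
      · have hu0 : u = 0 := by omega
        have hsk : s = P.k - 1 := by omega
        subst hu0; subst hsk
        have h1 : (P.k - 1) + 1 = P.k := by omega
        have hVk : P.V P.k = P.V 0 := by have := P.perV 0; rwa [zero_add] at this
        have hVmem : P.V 0 ∈ P.E (P.k - 1) := by
          have := P.hV1 (P.k - 1); rw [h1, hVk] at this; exact this
        have hEne : P.E (P.k - 1) ≠ P.E 0 := by
          have := P.EneAdd 0 (P.k - 1) (by omega) (by omega)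
          rw [zero_add] at this
          exact this.symm
        have ht0 : t = P.V 0 :=
          inter_unique hl (P.hE (P.k - 1)) (P.hE 0) hEne htE htu hVmem (P.hV 0)
        apply htVs1
        rw [h1, hVk, ht0]

lemma attach_eq (hk5 : 5 ≤ P.k) (f : Finset α) (hf : f ∈ H.edges) (hfC : ∀ j, f ≠ P.E j)
    (a b : ℕ) (ha : a < P.k) (hb : b < P.k) (y1 y2 : α)
    (hy1f : y1 ∈ f) (hy1 : y1 ∈ P.E a) (hy2f : y2 ∈ f) (hy2 : y2 ∈ P.E b) : a = b := by
  have hcase : ∀ a b : ℕ, a < b → b < P.k → ∀ y1 y2 : α, y1 ∈ f → y1 ∈ P.E a →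
      y2 ∈ f → y2 ∈ P.E b → False := by
    intro a b hab hbk y1 y2 h1f h1a h2f h2b
    rcases Nat.lt_or_ge (b - a) (P.k - 2) with hdk | hdk
    · exact P.no_attach hreg a (b - a) f y1 y2 hf hfC (by omega) (by omega) h1f h1a h2f
        (by rw [show a + (b - a) = b by omega]; exact h2b)
    · -- go the other way around: distance k - (b - a) ∈ [1,2]
      apply P.no_attach hreg b (P.k - (b - a)) f y2 y1 hf hfC (by omega) (by omega) h2f h2b h1f
      rw [show b + (P.k - (b - a)) = a + P.k by omega, P.perE]
      exact h1a
  by_contra hne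
  rcases Nat.lt_trichotomy a b with hord | hord | hord
  · exact hcase a b hord hb y1 y2 hy1f hy1 hy2f hy2
  · omega
  · exact hcase b a hord ha y2 y1 hy2f hy2 hy1f hy1

end Pkg

lemma no_two_cycle {H : FinHypergraph α} (hl : H.Linear) (v : ZMod 2 → α) (e : ZMod 2 → Finset α) :
    ¬ H.IsCycle 2 v e := by
  rintro ⟨-, hv, he, hmem, hinc⟩
  have h01 : (0 : ZMod 2) ≠ 1 := by decide
  have hvne : v 0 ≠ v 1 := fun h => h01 (hv h)
  have hene : e 0 ≠ e 1 := fun h => h01 (he h)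
  have h10 : (1 : ZMod 2) + 1 = 0 := by decide
  have hv0e1 : v 0 ∈ e 1 := by
    have := (hinc 1).2
    rwa [h10] at this
  have hsub : ({v 0, v 1} : Finset α) ⊆ e 0 ∩ e 1 := by
    intro x hx
    rcases Finset.mem_insert.mp hx with rfl | hx
    · exact Finset.mem_inter.mpr ⟨(hinc 0).1, hv0e1⟩
    · rw [Finset.mem_singleton] at hx; subst hx
      exact Finset.mem_inter.mpr ⟨(hinc 0).2, (hinc 1).1⟩
  have hc := Finset.card_le_card hsub
  rw [Finset.card_pair hvne] at hc
  have := hl (e 0) (hmem 0) (e 1) (hmem 1) hene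
  omega

lemma exists_pkg {H : FinHypergraph α} (hl : H.Linear) (hcyc : H.HasCycle) : Nonempty (Pkg H) := by
  have hne : {c : ℕ | ∃ v e, H.IsCycle c v e}.Nonempty := hcyc
  have hmem := Nat.sInf_mem hne
  have hmin : ∀ c, 2 ≤ c → c < sInf {c : ℕ | ∃ v e, H.IsCycle c v e} →
      ∀ (v' : ZMod c → α) (e' : ZMod c → Finset α), ¬ H.IsCycle c v' e' := by
    intro c h2 hlt v' e' hcyc'
    have : c ∈ {c : ℕ | ∃ v e, H.IsCycle c v e} := ⟨v', e', hcyc'⟩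
    have := Nat.sInf_le this
    omega
  obtain ⟨v, e, hc⟩ := hmem
  revert hmin hc v e
  generalize sInf {c : ℕ | ∃ v e, H.IsCycle c v e} = k
  intro hmin v e hc
  have hk2 : 2 ≤ k := hc.1
  have hk3 : 3 ≤ k := by
    by_contra h
    have hk2' : k = 2 := by omega
    subst hk2'
    exact no_two_cycle hl v e hc
  haveI : NeZero k := ⟨by omega⟩
  refine ⟨⟨k, fun s => v (s : ZMod k), fun s => e (s : ZMod k), hk3, ?_, ?_, ?_, ?_, ?_, ?_, ?_,
    hmin⟩⟩
  · intro s; exact hc.2.2.2.1 _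
  · intro s; exact (hc.2.2.2.2 _).1
  · intro s
    have := (hc.2.2.2.2 ((s : ℕ) : ZMod k)).2
    have hcast : (((s + 1 : ℕ)) : ZMod k) = ((s : ℕ) : ZMod k) + 1 := by push_cast; ring
    rw [← hcast] at this
    exact this
  · intro s
    have hcast : (((s + k : ℕ)) : ZMod k) = ((s : ℕ) : ZMod k) := by
      push_cast [ZMod.natCast_self]; ring
    simp only [hcast]
  · intro s
    have hcast : (((s + k : ℕ)) : ZMod k) = ((s : ℕ) : ZMod k) := by
      push_cast [ZMod.natCast_self]; ring
    simp only [hcast]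
  · intro s u h
    have := hc.2.1 h
    exact (ZMod.natCast_eq_natCast_iff s u k).mp this
  · intro s u h
    have := hc.2.2.1 h
    exact (ZMod.natCast_eq_natCast_iff s u k).mp this

lemma branchR0 {H : FinHypergraph α} (P : Pkg H) (hreg : ∀ e ∈ H.edges, ∀ z ∈ e, H.degree z = 2)
    (r : ℕ) (hr : 1 ≤ r) (hkval : P.k = 3 * r)
    (T : ℕ → α) (hTcov : ∀ s, ∀ x ∈ P.E s, x = P.V s ∨ x = P.V (s + 1) ∨ x = T s)
    (IH : ∀ H' : FinHypergraph α, H'.edges ⊆ H.edges → H'.edges.card + 1 ≤ H.edges.card →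
        ∃ S, H'.IsFVS S ∧ 3 * S.card ≤ H'.edges.card) :
    ∃ S, H.IsFVS S ∧ 3 * S.card ≤ H.edges.card := by
  have hk3 := P.hk
  have hEnat : ∀ a b, a < P.k → b < P.k → P.E a = P.E b → a = b := by
    intro a b ha hb hEq
    exact P.modlt ha hb (P.injE a b hEq)
  have hVinE : ∀ j m, P.V (3*j+1) ∈ P.E m → m % P.k = (3*j) % P.k ∨ m % P.k = (3*j+1) % P.k := by
    intro j m hmem
    have h1 : (3*j) + 1 = 3*j+1 := by omega
    exact P.VnotinE hreg (3*j) m (by rw [h1]; exact hmem)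
  set X : Finset α := (Finset.range r).image (fun i => P.V (3*i+1)) with hX
  have hVX : ∀ i, i < r → P.V (3*i+1) ∈ X := by
    intro i hi
    exact Finset.mem_image.mpr ⟨i, Finset.mem_range.mpr hi, rfl⟩
  have hsurv : ∀ m, m < P.k → (∀ j, j < r → m ≠ 3*j ∧ m ≠ 3*j+1) →
      ∀ x ∈ P.E m, x ∉ X := by
    intro m hm hform x hx hxX
    obtain ⟨j, hj, rfl⟩ := Finset.mem_image.mp hxX
    rw [Finset.mem_range] at hj
    rcases hVinE j m hx with h | h
    · exact (hform j hj).1 (P.modlt hm (by omega) h)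
    · exact (hform j hj).2 (P.modlt hm (by omega) h)
  have hdead0 : ∀ j, j < r → P.E (3*j) ∉ (H.delV X).edges := by
    intro j hj hmem
    exact (mem_delV_edges.mp hmem).2 _ (P.hV1 (3*j)) (hVX j hj)
  have hdead1 : ∀ j, j < r → P.E (3*j+1) ∉ (H.delV X).edges := by
    intro j hj hmem
    exact (mem_delV_edges.mp hmem).2 _ (P.hV (3*j+1)) (hVX j hj)
  have hE3 : ∀ j : ℕ, P.E (3*j) = P.E (3*(j % r)) := by
    intro j
    apply P.Econgr
    have h1 : 3*j = 3*(j % r) + (j / r) * P.k := by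
      rw [hkval]
      conv_lhs => rw [← Nat.div_add_mod j r]
      ring
    rw [h1, Nat.add_mul_mod_self_right]
  have hdead0' : ∀ j, P.E (3*j) ∉ (H.delV X).edges := by
    intro j
    rw [hE3 j]
    exact hdead0 (j % r) (Nat.mod_lt _ (by omega))
  have hsubV : (H.delV X).edges ⊆ H.edges := delV_edges_subset H X
  apply bundle (X := X)
    (D := ((Finset.range r).image (fun i => P.E (3*i))) ∪
      ((Finset.range r).image (fun i => P.E (3*i+1))))
    (Q1 := (Finset.range r).image (fun i => P.E (3*i+2)))
    (Q2 := ∅) r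
  · intro x hx
    obtain ⟨j, hj, rfl⟩ := Finset.mem_image.mp hx
    exact H.mem_verts _ (P.hE (3*j+1)) _ (P.hV (3*j+1))
  · intro d hd
    rcases Finset.mem_union.mp hd with hd | hd <;>
      · obtain ⟨j, _, rfl⟩ := Finset.mem_image.mp hd
        exact P.hE _
  · intro d hd
    rcases Finset.mem_union.mp hd with hd | hd
    · obtain ⟨j, hj, rfl⟩ := Finset.mem_image.mp hd
      rw [Finset.mem_range] at hj
      exact ⟨_, P.hV1 (3*j), hVX j hj⟩
    · obtain ⟨j, hj, rfl⟩ := Finset.mem_image.mp hd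
      rw [Finset.mem_range] at hj
      exact ⟨_, P.hV (3*j+1), hVX j hj⟩
  · have hc0 : ((Finset.range r).image (fun i => P.E (3*i))).card = r := by
      rw [Finset.card_image_of_injOn, Finset.card_range]
      intro i hi j hj hEq
      rw [Finset.mem_coe, Finset.mem_range] at hi hj
      have := hEnat _ _ (by omega) (by omega) hEq
      omega
    have hc1 : ((Finset.range r).image (fun i => P.E (3*i+1))).card = r := by
      rw [Finset.card_image_of_injOn, Finset.card_range]
      intro i hi j hj hEq
      rw [Finset.mem_coe, Finset.mem_range] at hi hj
      have := hEnat _ _ (by omega) (by omega) hEq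
      omega
    have hdisj : Disjoint ((Finset.range r).image (fun i => P.E (3*i)))
        ((Finset.range r).image (fun i => P.E (3*i+1))) := by
      rw [Finset.disjoint_left]
      intro a ha ha'
      obtain ⟨i, hi, rfl⟩ := Finset.mem_image.mp ha
      obtain ⟨j, hj, hEq⟩ := Finset.mem_image.mp ha'
      rw [Finset.mem_range] at hi hj
      have := hEnat _ _ (by omega) (by omega) hEq
      omega
    rw [Finset.card_union_of_disjoint hdisj, hc0, hc1]
    omega
  · intro q hq
    obtain ⟨i, hi, rfl⟩ := Finset.mem_image.mp hq
    rw [Finset.mem_range] at hi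
    exact mem_delV_edges.mpr ⟨P.hE _, hsurv (3*i+2) (by omega) (by intro j hj; omega)⟩
  · intro q hq
    obtain ⟨i, hi, rfl⟩ := Finset.mem_image.mp hq
    rw [Finset.mem_range] at hi
    apply prune_card (t := T (3*i+2))
    intro x hx hxne
    rcases hTcov (3*i+2) x hx with rfl | h | h
    · have h1 : (3*i+1) + 1 = 3*i+2 := by omega
      have hp := P.pairV hreg (3*i+1)
      rw [h1] at hp
      exact deg_le_one hsubV hp (hdead1 i (by omega))
    · subst h
      have h1 : (3*i+2) + 1 = 3*i+3 := by omega
      have hp := P.pairV hreg (3*i+2)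
      rw [h1] at hp
      have hdead : P.E (3*i+3) ∉ (H.delV X).edges := by
        have h2 : 3*i+3 = 3*(i+1) := by omega
        rw [h2]
        exact hdead0' (i+1)
      exact deg_le_one hsubV (fun h hh hz => (hp h hh hz).symm) hdead
    · exact absurd h hxne
  · simp
  · intro q hq
    simp at hq
  · have hc2 : ((Finset.range r).image (fun i => P.E (3*i+2))).card = r := by
      rw [Finset.card_image_of_injOn, Finset.card_range]
      intro i hi j hj hEq
      rw [Finset.mem_coe, Finset.mem_range] at hi hj
      have := hEnat _ _ (by omega) (by omega) hEq
      omega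
    rw [hc2]
    omega
  · have := Finset.card_image_le (f := fun i => P.V (3*i+1)) (s := Finset.range r)
    rw [Finset.card_range] at this
    exact this
  · omega
  · exact IH

lemma branchR1 {H : FinHypergraph α} (P : Pkg H) (hreg : ∀ e ∈ H.edges, ∀ z ∈ e, H.degree z = 2)
    (r : ℕ) (hr : 1 ≤ r) (hkval : P.k = 3 * r + 1)
    (T : ℕ → α) (hTcov : ∀ s, ∀ x ∈ P.E s, x = P.V s ∨ x = P.V (s + 1) ∨ x = T s)
    (t0 : α) (ht0cov : ∀ x ∈ P.E 0, x = P.V 0 ∨ x = P.V 1 ∨ x = t0)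
    (w p : Finset α) (z : α)
    (hwE : w ∈ H.edges) (hpE : p ∈ H.edges)
    (hwC : ∀ j, w ≠ P.E j) (hpC : ∀ j, p ≠ P.E j)
    (ht0pair : ∀ h ∈ H.edges, t0 ∈ h → h = P.E 0 ∨ h = w)
    (hzw : z ∈ w) (hzp : z ∈ p) (hwp : w ≠ p)
    (hzpair : ∀ h ∈ H.edges, z ∈ h → h = w ∨ h = p)
    (IH : ∀ H' : FinHypergraph α, H'.edges ⊆ H.edges → H'.edges.card + 1 ≤ H.edges.card →
        ∃ S, H'.IsFVS S ∧ 3 * S.card ≤ H'.edges.card) :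
    ∃ S, H.IsFVS S ∧ 3 * S.card ≤ H.edges.card := by
  have hk3 := P.hk
  have hznotE : ∀ j, z ∉ P.E j := by
    intro j hzj
    rcases hzpair _ (P.hE j) hzj with h | h
    · exact hwC j h.symm
    · exact hpC j h.symm
  have hEnat : ∀ a b, a < P.k → b < P.k → P.E a = P.E b → a = b := by
    intro a b ha hb hEq
    exact P.modlt ha hb (P.injE a b hEq)
  have hVinE : ∀ j m, P.V (3*j+3) ∈ P.E m → m % P.k = (3*j+2) % P.k ∨ m % P.k = (3*j+3) % P.k := by
    intro j m hmem
    have h1 : (3*j+2) + 1 = 3*j+3 := by omega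
    have := P.VnotinE hreg (3*j+2) m (by rw [h1]; exact hmem)
    rwa [h1] at this
  set X : Finset α := insert z ((Finset.range r).image (fun i => P.V (3*i+3))) with hX
  have hzX : z ∈ X := Finset.mem_insert_self _ _
  have hVX : ∀ i, i < r → P.V (3*i+3) ∈ X := by
    intro i hi
    exact Finset.mem_insert_of_mem (Finset.mem_image.mpr ⟨i, Finset.mem_range.mpr hi, rfl⟩)
  have hsurv : ∀ m, m < P.k → (∀ j, j < r → m ≠ 3*j+2 ∧ m ≠ 3*j+3) →
      ∀ x ∈ P.E m, x ∉ X := by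
    intro m hm hform x hx hxX
    rcases Finset.mem_insert.mp hxX with rfl | hxX
    · exact hznotE m hx
    · obtain ⟨j, hj, rfl⟩ := Finset.mem_image.mp hxX
      rw [Finset.mem_range] at hj
      have hj2 : 3*j+2 < P.k := by omega
      have hj3 : 3*j+3 < P.k := by omega
      rcases hVinE j m hx with h | h
      · exact (hform j hj).1 (P.modlt hm hj2 h)
      · exact (hform j hj).2 (P.modlt hm hj3 h)
  have hdeadW : w ∉ (H.delV X).edges := fun hmem => (mem_delV_edges.mp hmem).2 z hzw hzX
  have hdeadP : p ∉ (H.delV X).edges := fun hmem => (mem_delV_edges.mp hmem).2 z hzp hzX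
  have hdead2 : ∀ i, i < r → P.E (3*i+2) ∉ (H.delV X).edges := by
    intro i hi hmem
    have h1 : (3*i+2) + 1 = 3*i+3 := by omega
    have hv : P.V (3*i+3) ∈ P.E (3*i+2) := by
      have := P.hV1 (3*i+2); rwa [h1] at this
    exact (mem_delV_edges.mp hmem).2 _ hv (hVX i hi)
  have hdead3 : ∀ i, i < r → P.E (3*i+3) ∉ (H.delV X).edges := by
    intro i hi hmem
    exact (mem_delV_edges.mp hmem).2 _ (P.hV (3*i+3)) (hVX i hi)
  have hsubV : (H.delV X).edges ⊆ H.edges := delV_edges_subset H X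
  -- the pair of V 0 is {E (k-1), E 0}
  have pair0 : ∀ h ∈ H.edges, P.V 0 ∈ h → h = P.E (P.k - 1) ∨ h = P.E 0 := by
    have h1 : (P.k - 1) + 1 = P.k := by omega
    have h2 : P.V P.k = P.V 0 := by have := P.perV 0; rwa [zero_add] at this
    have h3 : P.E P.k = P.E 0 := by have := P.perE 0; rwa [zero_add] at this
    have := P.pairV hreg (P.k - 1)
    rw [h1, h2, h3] at this
    exact this
  have hdeadk1 : P.E (P.k - 1) ∉ (H.delV X).edges := by
    have h1 : P.k - 1 = 3*(r-1)+3 := by omega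
    rw [h1]
    exact hdead3 (r-1) (by omega)
  apply bundle (X := X)
    (D := insert w (insert p (((Finset.range r).image (fun i => P.E (3*i+2))) ∪
      ((Finset.range r).image (fun i => P.E (3*i+3))))))
    (Q1 := insert (P.E 0) ((Finset.range (r-1)).image (fun i => P.E (3*i+4))))
    (Q2 := {P.E 1}) (r + 1)
  -- X ⊆ verts
  · intro x hx
    rcases Finset.mem_insert.mp hx with rfl | hx
    · exact H.mem_verts w hwE x hzw
    · obtain ⟨j, hj, rfl⟩ := Finset.mem_image.mp hx
      exact H.mem_verts _ (P.hE (3*j+3)) _ (P.hV (3*j+3))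
  -- D ⊆ edges
  · intro d hd
    rcases Finset.mem_insert.mp hd with rfl | hd
    · exact hwE
    rcases Finset.mem_insert.mp hd with rfl | hd
    · exact hpE
    rcases Finset.mem_union.mp hd with hd | hd
    · obtain ⟨j, _, rfl⟩ := Finset.mem_image.mp hd
      exact P.hE _
    · obtain ⟨j, _, rfl⟩ := Finset.mem_image.mp hd
      exact P.hE _
  -- hmeet
  · intro d hd
    rcases Finset.mem_insert.mp hd with rfl | hd
    · exact ⟨z, hzw, hzX⟩
    rcases Finset.mem_insert.mp hd with rfl | hd
    · exact ⟨z, hzp, hzX⟩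
    rcases Finset.mem_union.mp hd with hd | hd
    · obtain ⟨j, hj, rfl⟩ := Finset.mem_image.mp hd
      rw [Finset.mem_range] at hj
      have h1 : (3*j+2) + 1 = 3*j+3 := by omega
      have hv : P.V (3*j+3) ∈ P.E (3*j+2) := by
        have := P.hV1 (3*j+2); rwa [h1] at this
      exact ⟨_, hv, hVX j hj⟩
    · obtain ⟨j, hj, rfl⟩ := Finset.mem_image.mp hd
      rw [Finset.mem_range] at hj
      exact ⟨_, P.hV _, hVX j hj⟩
  -- hDcard
  · have hc2 : ((Finset.range r).image (fun i => P.E (3*i+2))).card = r := by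
      rw [Finset.card_image_of_injOn, Finset.card_range]
      intro i hi j hj hEq
      rw [Finset.mem_coe, Finset.mem_range] at hi hj
      have := hEnat _ _ (by omega) (by omega) hEq
      omega
    have hc3 : ((Finset.range r).image (fun i => P.E (3*i+3))).card = r := by
      rw [Finset.card_image_of_injOn, Finset.card_range]
      intro i hi j hj hEq
      rw [Finset.mem_coe, Finset.mem_range] at hi hj
      have := hEnat _ _ (by omega) (by omega) hEq
      omega
    have hdisj : Disjoint ((Finset.range r).image (fun i => P.E (3*i+2)))
        ((Finset.range r).image (fun i => P.E (3*i+3))) := by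
      rw [Finset.disjoint_left]
      intro a ha ha'
      obtain ⟨i, hi, rfl⟩ := Finset.mem_image.mp ha
      obtain ⟨j, hj, hEq⟩ := Finset.mem_image.mp ha'
      rw [Finset.mem_range] at hi hj
      have := hEnat _ _ (by omega) (by omega) hEq
      omega
    have hpnot : p ∉ ((Finset.range r).image (fun i => P.E (3*i+2))) ∪
        ((Finset.range r).image (fun i => P.E (3*i+3))) := by
      intro hmem
      rcases Finset.mem_union.mp hmem with hmem | hmem <;>
        · obtain ⟨j, _, hEq⟩ := Finset.mem_image.mp hmem
          exact hpC _ hEq.symm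
    have hwnot : w ∉ insert p (((Finset.range r).image (fun i => P.E (3*i+2))) ∪
        ((Finset.range r).image (fun i => P.E (3*i+3)))) := by
      intro hmem
      rcases Finset.mem_insert.mp hmem with h | hmem
      · exact hwp h
      rcases Finset.mem_union.mp hmem with hmem | hmem <;>
        · obtain ⟨j, _, hEq⟩ := Finset.mem_image.mp hmem
          exact hwC _ hEq.symm
    rw [Finset.card_insert_of_notMem hwnot, Finset.card_insert_of_notMem hpnot,
      Finset.card_union_of_disjoint hdisj, hc2, hc3]
    omega
  -- hQ1 ⊆ (delV X).edges
  · intro q hq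
    rcases Finset.mem_insert.mp hq with rfl | hq
    · exact mem_delV_edges.mpr ⟨P.hE 0, hsurv 0 (by omega) (by intro j hj; omega)⟩
    · obtain ⟨i, hi, rfl⟩ := Finset.mem_image.mp hq
      rw [Finset.mem_range] at hi
      exact mem_delV_edges.mpr ⟨P.hE _, hsurv (3*i+4) (by omega) (by intro j hj; omega)⟩
  -- hQ1val
  · intro q hq
    rcases Finset.mem_insert.mp hq with rfl | hq
    · -- q = E 0, exceptional V 1
      apply prune_card (t := P.V 1)
      intro x hx hxne
      rcases ht0cov x hx with rfl | h | rfl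
      · exact deg_le_one hsubV pair0 hdeadk1
      · exact absurd h hxne
      · exact deg_le_one hsubV (fun h hh hz => (ht0pair h hh hz).symm) hdeadW
    · obtain ⟨i, hi, rfl⟩ := Finset.mem_image.mp hq
      rw [Finset.mem_range] at hi
      apply prune_card (t := T (3*i+4))
      intro x hx hxne
      rcases hTcov (3*i+4) x hx with rfl | h | h
      · -- x = V (3i+4); pair {E (3i+3), E (3i+4)}
        have h1 : (3*i+3) + 1 = 3*i+4 := by omega
        have hp := P.pairV hreg (3*i+3)
        rw [h1] at hp
        exact deg_le_one hsubV hp (hdead3 i (by omega))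
      · -- x = V (3i+5); pair {E (3i+4), E (3i+5)}
        subst h
        have h1 : (3*i+4) + 1 = 3*i+5 := by omega
        have hp := P.pairV hreg (3*i+4)
        rw [h1] at hp
        have hdead : P.E (3*i+5) ∉ (H.delV X).edges := by
          have h2 : 3*i+5 = 3*(i+1)+2 := by omega
          rw [h2]
          exact hdead2 (i+1) (by omega)
        exact deg_le_one hsubV (fun h hh hz => (hp h hh hz).symm) hdead
      · exact absurd h hxne
  -- hQ2 ⊆ H2.edges
  · intro q hq
    rw [Finset.mem_singleton] at hq
    subst hq
    rw [mem_delE_edges]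
    constructor
    · exact mem_delV_edges.mpr ⟨P.hE 1, hsurv 1 (by omega) (by intro j hj; omega)⟩
    · intro hmem
      rcases Finset.mem_insert.mp hmem with h | hmem
      · have := hEnat 1 0 (by omega) (by omega) h
        omega
      · obtain ⟨i, hi, hEq⟩ := Finset.mem_image.mp hmem
        rw [Finset.mem_range] at hi
        have := hEnat 1 (3*i+4) (by omega) (by omega) hEq.symm
        omega
  -- hQ2val
  · intro q hq
    rw [Finset.mem_singleton] at hq
    subst hq
    have hsub2 : ((H.delV X).delE (insert (P.E 0)
        ((Finset.range (r-1)).image (fun i => P.E (3*i+4))))).edges ⊆ H.edges :=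
      (delE_edges_subset _ _).trans hsubV
    apply prune_card (t := T 1)
    intro x hx hxne
    rcases hTcov 1 x hx with rfl | h | h
    · -- x = V 1; pair {E 0, E 1}
      have hp := P.pairV hreg 0
      rw [zero_add] at hp
      have hdead : P.E 0 ∉ ((H.delV X).delE (insert (P.E 0)
          ((Finset.range (r-1)).image (fun i => P.E (3*i+4))))).edges := by
        intro hmem
        exact (mem_delE_edges.mp hmem).2 (Finset.mem_insert_self _ _)
      exact deg_le_one hsub2 hp hdead
    · -- x = V 2; pair {E 1, E 2}
      subst h
      have hp := P.pairV hreg 1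
      have hdead : P.E (1+1) ∉ ((H.delV X).delE (insert (P.E 0)
          ((Finset.range (r-1)).image (fun i => P.E (3*i+4))))).edges := by
        intro hmem
        have h2 : (1:ℕ)+1 = 3*0+2 := by omega
        rw [h2] at hmem
        exact hdead2 0 (by omega) (delE_edges_subset _ _ hmem)
      exact deg_le_one hsub2 (fun h hh hz => (hp h hh hz).symm) hdead
    · exact absurd h hxne
  -- hQcard
  · have hnot : P.E 0 ∉ (Finset.range (r-1)).image (fun i => P.E (3*i+4)) := by
      intro hmem
      obtain ⟨i, hi, hEq⟩ := Finset.mem_image.mp hmem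
      rw [Finset.mem_range] at hi
      have := hEnat (3*i+4) 0 (by omega) (by omega) hEq
      omega
    have hcQ : ((Finset.range (r-1)).image (fun i => P.E (3*i+4))).card = r - 1 := by
      rw [Finset.card_image_of_injOn, Finset.card_range]
      intro i hi j hj hEq
      rw [Finset.mem_coe, Finset.mem_range] at hi hj
      have := hEnat _ _ (by omega) (by omega) hEq
      omega
    rw [Finset.card_insert_of_notMem hnot, hcQ, Finset.card_singleton]
    omega
  -- hXcard
  · calc X.card ≤ ((Finset.range r).image (fun i => P.V (3*i+3))).card + 1 :=
        Finset.card_insert_le _ _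
    _ ≤ r + 1 := by
        have := Finset.card_image_le (f := fun i => P.V (3*i+3)) (s := Finset.range r)
        rw [Finset.card_range] at this
        omega
  · omega
  · exact IH

lemma branchR2 {H : FinHypergraph α} (P : Pkg H) (hreg : ∀ e ∈ H.edges, ∀ z ∈ e, H.degree z = 2)
    (r : ℕ) (hr : 1 ≤ r) (hkval : P.k = 3 * r + 2)
    (T : ℕ → α) (hTcov : ∀ s, ∀ x ∈ P.E s, x = P.V s ∨ x = P.V (s + 1) ∨ x = T s)
    (t0 : α) (ht0cov : ∀ x ∈ P.E 0, x = P.V 0 ∨ x = P.V 1 ∨ x = t0)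
    (t2 : α) (ht2cov : ∀ x ∈ P.E 2, x = P.V 2 ∨ x = P.V 3 ∨ x = t2)
    (w1 p1 w3 p3 : Finset α) (z1 z3 : α)
    (hw1E : w1 ∈ H.edges) (hp1E : p1 ∈ H.edges) (hw3E : w3 ∈ H.edges) (hp3E : p3 ∈ H.edges)
    (hw1C : ∀ j, w1 ≠ P.E j) (hp1C : ∀ j, p1 ≠ P.E j)
    (hw3C : ∀ j, w3 ≠ P.E j) (hp3C : ∀ j, p3 ≠ P.E j)
    (ht0pair : ∀ h ∈ H.edges, t0 ∈ h → h = P.E 0 ∨ h = w1)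
    (ht2pair : ∀ h ∈ H.edges, t2 ∈ h → h = P.E 2 ∨ h = w3)
    (hz1w1 : z1 ∈ w1) (hz1p1 : z1 ∈ p1) (hw1p1 : w1 ≠ p1)
    (hz1pair : ∀ h ∈ H.edges, z1 ∈ h → h = w1 ∨ h = p1)
    (hz3w3 : z3 ∈ w3) (hz3p3 : z3 ∈ p3) (hw3p3 : w3 ≠ p3)
    (hz3pair : ∀ h ∈ H.edges, z3 ∈ h → h = w3 ∨ h = p3)
    (hw1w3 : w1 ≠ w3) (hp1w3 : p1 ≠ w3) (hp3w1 : p3 ≠ w1) (hp1p3 : p1 ≠ p3)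
    (IH : ∀ H' : FinHypergraph α, H'.edges ⊆ H.edges → H'.edges.card + 1 ≤ H.edges.card →
        ∃ S, H'.IsFVS S ∧ 3 * S.card ≤ H'.edges.card) :
    ∃ S, H.IsFVS S ∧ 3 * S.card ≤ H.edges.card := by
  have hk3 := P.hk
  have hz1notE : ∀ j, z1 ∉ P.E j := by
    intro j hzj
    rcases hz1pair _ (P.hE j) hzj with h | h
    · exact hw1C j h.symm
    · exact hp1C j h.symm
  have hz3notE : ∀ j, z3 ∉ P.E j := by
    intro j hzj
    rcases hz3pair _ (P.hE j) hzj with h | h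
    · exact hw3C j h.symm
    · exact hp3C j h.symm
  have hz13 : z1 ≠ z3 := by
    intro hEq
    rcases hz1pair w3 hw3E (hEq ▸ hz3w3) with h | h
    · exact hw1w3 h.symm
    · exact hp1w3 h.symm
  have hEnat : ∀ a b, a < P.k → b < P.k → P.E a = P.E b → a = b := by
    intro a b ha hb hEq
    exact P.modlt ha hb (P.injE a b hEq)
  have hVinE : ∀ j m, P.V (3*j+4) ∈ P.E m →
      m % P.k = (3*j+3) % P.k ∨ m % P.k = (3*j+4) % P.k := by
    intro j m hmem
    have h1 : (3*j+3) + 1 = 3*j+4 := by omega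
    have := P.VnotinE hreg (3*j+3) m (by rw [h1]; exact hmem)
    rwa [h1] at this
  set X : Finset α := insert z1 (insert z3 ((Finset.range r).image (fun i => P.V (3*i+4))))
    with hX
  have hz1X : z1 ∈ X := Finset.mem_insert_self _ _
  have hz3X : z3 ∈ X := Finset.mem_insert_of_mem (Finset.mem_insert_self _ _)
  have hVX : ∀ i, i < r → P.V (3*i+4) ∈ X := by
    intro i hi
    exact Finset.mem_insert_of_mem (Finset.mem_insert_of_mem
      (Finset.mem_image.mpr ⟨i, Finset.mem_range.mpr hi, rfl⟩))
  have hsurv : ∀ m, m < P.k → (∀ j, j < r → m ≠ 3*j+3 ∧ m ≠ 3*j+4) →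
      ∀ x ∈ P.E m, x ∉ X := by
    intro m hm hform x hx hxX
    rcases Finset.mem_insert.mp hxX with rfl | hxX
    · exact hz1notE m hx
    rcases Finset.mem_insert.mp hxX with rfl | hxX
    · exact hz3notE m hx
    obtain ⟨j, hj, rfl⟩ := Finset.mem_image.mp hxX
    rw [Finset.mem_range] at hj
    rcases hVinE j m hx with h | h
    · exact (hform j hj).1 (P.modlt hm (by omega) h)
    · exact (hform j hj).2 (P.modlt hm (by omega) h)
  have hdeadW1 : w1 ∉ (H.delV X).edges := fun hmem => (mem_delV_edges.mp hmem).2 z1 hz1w1 hz1X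
  have hdeadP1 : p1 ∉ (H.delV X).edges := fun hmem => (mem_delV_edges.mp hmem).2 z1 hz1p1 hz1X
  have hdeadW3 : w3 ∉ (H.delV X).edges := fun hmem => (mem_delV_edges.mp hmem).2 z3 hz3w3 hz3X
  have hdeadP3 : p3 ∉ (H.delV X).edges := fun hmem => (mem_delV_edges.mp hmem).2 z3 hz3p3 hz3X
  have hdead3 : ∀ i, i < r → P.E (3*i+3) ∉ (H.delV X).edges := by
    intro i hi hmem
    have h1 : (3*i+3) + 1 = 3*i+4 := by omega
    have hv : P.V (3*i+4) ∈ P.E (3*i+3) := by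
      have := P.hV1 (3*i+3); rwa [h1] at this
    exact (mem_delV_edges.mp hmem).2 _ hv (hVX i hi)
  have hdead4 : ∀ i, i < r → P.E (3*i+4) ∉ (H.delV X).edges := by
    intro i hi hmem
    exact (mem_delV_edges.mp hmem).2 _ (P.hV (3*i+4)) (hVX i hi)
  have hsubV : (H.delV X).edges ⊆ H.edges := delV_edges_subset H X
  have pair0 : ∀ h ∈ H.edges, P.V 0 ∈ h → h = P.E (P.k - 1) ∨ h = P.E 0 := by
    have h1 : (P.k - 1) + 1 = P.k := by omega
    have h2 : P.V P.k = P.V 0 := by have := P.perV 0; rwa [zero_add] at this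
    have h3 : P.E P.k = P.E 0 := by have := P.perE 0; rwa [zero_add] at this
    have := P.pairV hreg (P.k - 1)
    rw [h1, h2, h3] at this
    exact this
  have hdeadk1 : P.E (P.k - 1) ∉ (H.delV X).edges := by
    have h1 : P.k - 1 = 3*(r-1)+4 := by omega
    rw [h1]
    exact hdead4 (r-1) (by omega)
  apply bundle (X := X)
    (D := insert w1 (insert p1 (insert w3 (insert p3
      (((Finset.range r).image (fun i => P.E (3*i+3))) ∪
       ((Finset.range r).image (fun i => P.E (3*i+4))))))))
    (Q1 := insert (P.E 0) (insert (P.E 2) ((Finset.range (r-1)).image (fun i => P.E (3*i+5)))))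
    (Q2 := {P.E 1}) (r + 2)
  · intro x hx
    rcases Finset.mem_insert.mp hx with rfl | hx
    · exact H.mem_verts w1 hw1E x hz1w1
    rcases Finset.mem_insert.mp hx with rfl | hx
    · exact H.mem_verts w3 hw3E x hz3w3
    obtain ⟨j, hj, rfl⟩ := Finset.mem_image.mp hx
    exact H.mem_verts _ (P.hE (3*j+4)) _ (P.hV (3*j+4))
  · intro d hd
    rcases Finset.mem_insert.mp hd with rfl | hd
    · exact hw1E
    rcases Finset.mem_insert.mp hd with rfl | hd
    · exact hp1E
    rcases Finset.mem_insert.mp hd with rfl | hd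
    · exact hw3E
    rcases Finset.mem_insert.mp hd with rfl | hd
    · exact hp3E
    rcases Finset.mem_union.mp hd with hd | hd <;>
      · obtain ⟨j, _, rfl⟩ := Finset.mem_image.mp hd
        exact P.hE _
  · intro d hd
    rcases Finset.mem_insert.mp hd with rfl | hd
    · exact ⟨z1, hz1w1, hz1X⟩
    rcases Finset.mem_insert.mp hd with rfl | hd
    · exact ⟨z1, hz1p1, hz1X⟩
    rcases Finset.mem_insert.mp hd with rfl | hd
    · exact ⟨z3, hz3w3, hz3X⟩
    rcases Finset.mem_insert.mp hd with rfl | hd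
    · exact ⟨z3, hz3p3, hz3X⟩
    rcases Finset.mem_union.mp hd with hd | hd
    · obtain ⟨j, hj, rfl⟩ := Finset.mem_image.mp hd
      rw [Finset.mem_range] at hj
      have h1 : (3*j+3) + 1 = 3*j+4 := by omega
      have hv : P.V (3*j+4) ∈ P.E (3*j+3) := by
        have := P.hV1 (3*j+3); rwa [h1] at this
      exact ⟨_, hv, hVX j hj⟩
    · obtain ⟨j, hj, rfl⟩ := Finset.mem_image.mp hd
      rw [Finset.mem_range] at hj
      exact ⟨_, P.hV _, hVX j hj⟩
  · have hc3 : ((Finset.range r).image (fun i => P.E (3*i+3))).card = r := by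
      rw [Finset.card_image_of_injOn, Finset.card_range]
      intro i hi j hj hEq
      rw [Finset.mem_coe, Finset.mem_range] at hi hj
      have := hEnat _ _ (by omega) (by omega) hEq
      omega
    have hc4 : ((Finset.range r).image (fun i => P.E (3*i+4))).card = r := by
      rw [Finset.card_image_of_injOn, Finset.card_range]
      intro i hi j hj hEq
      rw [Finset.mem_coe, Finset.mem_range] at hi hj
      have := hEnat _ _ (by omega) (by omega) hEq
      omega
    have hdisj : Disjoint ((Finset.range r).image (fun i => P.E (3*i+3)))
        ((Finset.range r).image (fun i => P.E (3*i+4))) := by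
      rw [Finset.disjoint_left]
      intro a ha ha'
      obtain ⟨i, hi, rfl⟩ := Finset.mem_image.mp ha
      obtain ⟨j, hj, hEq⟩ := Finset.mem_image.mp ha'
      rw [Finset.mem_range] at hi hj
      have := hEnat _ _ (by omega) (by omega) hEq
      omega
    have hUnot : ∀ g : Finset α, (∀ j, g ≠ P.E j) →
        g ∉ ((Finset.range r).image (fun i => P.E (3*i+3))) ∪
          ((Finset.range r).image (fun i => P.E (3*i+4))) := by
      intro g hg hmem
      rcases Finset.mem_union.mp hmem with hmem | hmem <;>
        · obtain ⟨j, _, hEq⟩ := Finset.mem_image.mp hmem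
          exact hg _ hEq.symm
    have h4 : p3 ∉ (((Finset.range r).image (fun i => P.E (3*i+3))) ∪
        ((Finset.range r).image (fun i => P.E (3*i+4)))) := hUnot p3 hp3C
    have h3 : w3 ∉ insert p3 (((Finset.range r).image (fun i => P.E (3*i+3))) ∪
        ((Finset.range r).image (fun i => P.E (3*i+4)))) := by
      intro hmem
      rcases Finset.mem_insert.mp hmem with h | hmem
      · exact hw3p3 h
      · exact hUnot w3 hw3C hmem
    have h2 : p1 ∉ insert w3 (insert p3 (((Finset.range r).image (fun i => P.E (3*i+3))) ∪
        ((Finset.range r).image (fun i => P.E (3*i+4))))) := by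
      intro hmem
      rcases Finset.mem_insert.mp hmem with h | hmem
      · exact hp1w3 h
      rcases Finset.mem_insert.mp hmem with h | hmem
      · exact hp1p3 h
      · exact hUnot p1 hp1C hmem
    have h1 : w1 ∉ insert p1 (insert w3 (insert p3
        (((Finset.range r).image (fun i => P.E (3*i+3))) ∪
         ((Finset.range r).image (fun i => P.E (3*i+4)))))) := by
      intro hmem
      rcases Finset.mem_insert.mp hmem with h | hmem
      · exact hw1p1 h
      rcases Finset.mem_insert.mp hmem with h | hmem
      · exact hw1w3 h
      rcases Finset.mem_insert.mp hmem with h | hmem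
      · exact absurd h.symm hp3w1
      · exact hUnot w1 hw1C hmem
    rw [Finset.card_insert_of_notMem h1, Finset.card_insert_of_notMem h2,
      Finset.card_insert_of_notMem h3, Finset.card_insert_of_notMem h4,
      Finset.card_union_of_disjoint hdisj, hc3, hc4]
    omega
  · intro q hq
    rcases Finset.mem_insert.mp hq with rfl | hq
    · exact mem_delV_edges.mpr ⟨P.hE 0, hsurv 0 (by omega) (by intro j hj; omega)⟩
    rcases Finset.mem_insert.mp hq with rfl | hq
    · exact mem_delV_edges.mpr ⟨P.hE 2, hsurv 2 (by omega) (by intro j hj; omega)⟩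
    obtain ⟨i, hi, rfl⟩ := Finset.mem_image.mp hq
    rw [Finset.mem_range] at hi
    exact mem_delV_edges.mpr ⟨P.hE _, hsurv (3*i+5) (by omega) (by intro j hj; omega)⟩
  · intro q hq
    rcases Finset.mem_insert.mp hq with rfl | hq
    · apply prune_card (t := P.V 1)
      intro x hx hxne
      rcases ht0cov x hx with rfl | h | rfl
      · exact deg_le_one hsubV pair0 hdeadk1
      · exact absurd h hxne
      · exact deg_le_one hsubV (fun h hh hz => (ht0pair h hh hz).symm) hdeadW1
    rcases Finset.mem_insert.mp hq with rfl | hq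
    · apply prune_card (t := P.V 2)
      intro x hx hxne
      rcases ht2cov x hx with h | h | rfl
      · exact absurd h hxne
      · subst h
        have h1 : (2:ℕ) + 1 = 3*0+3 := by omega
        have hp := P.pairV hreg 2
        rw [h1] at hp
        exact deg_le_one hsubV (fun h hh hz => (hp h hh hz).symm) (hdead3 0 (by omega))
      · exact deg_le_one hsubV (fun h hh hz => (ht2pair h hh hz).symm) hdeadW3
    obtain ⟨i, hi, rfl⟩ := Finset.mem_image.mp hq
    rw [Finset.mem_range] at hi
    apply prune_card (t := T (3*i+5))
    intro x hx hxne
    rcases hTcov (3*i+5) x hx with rfl | h | h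
    · have h1 : (3*i+4) + 1 = 3*i+5 := by omega
      have hp := P.pairV hreg (3*i+4)
      rw [h1] at hp
      exact deg_le_one hsubV hp (hdead4 i (by omega))
    · subst h
      have h1 : (3*i+5) + 1 = 3*i+6 := by omega
      have hp := P.pairV hreg (3*i+5)
      rw [h1] at hp
      have hdead : P.E (3*i+6) ∉ (H.delV X).edges := by
        have h2 : 3*i+6 = 3*(i+1)+3 := by omega
        rw [h2]
        exact hdead3 (i+1) (by omega)
      exact deg_le_one hsubV (fun h hh hz => (hp h hh hz).symm) hdead
    · exact absurd h hxne
  · intro q hq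
    rw [Finset.mem_singleton] at hq
    subst hq
    rw [mem_delE_edges]
    constructor
    · exact mem_delV_edges.mpr ⟨P.hE 1, hsurv 1 (by omega) (by intro j hj; omega)⟩
    · intro hmem
      rcases Finset.mem_insert.mp hmem with h | hmem
      · have := hEnat 1 0 (by omega) (by omega) h
        omega
      rcases Finset.mem_insert.mp hmem with h | hmem
      · have := hEnat 1 2 (by omega) (by omega) h
        omega
      obtain ⟨i, hi, hEq⟩ := Finset.mem_image.mp hmem
      rw [Finset.mem_range] at hi
      have := hEnat 1 (3*i+5) (by omega) (by omega) hEq.symm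
      omega
  · intro q hq
    rw [Finset.mem_singleton] at hq
    subst hq
    have hsub2 : ((H.delV X).delE (insert (P.E 0) (insert (P.E 2)
        ((Finset.range (r-1)).image (fun i => P.E (3*i+5)))))).edges ⊆ H.edges :=
      (delE_edges_subset _ _).trans hsubV
    apply prune_card (t := T 1)
    intro x hx hxne
    rcases hTcov 1 x hx with rfl | h | h
    · have hp := P.pairV hreg 0
      rw [zero_add] at hp
      have hdead : P.E 0 ∉ ((H.delV X).delE (insert (P.E 0) (insert (P.E 2)
          ((Finset.range (r-1)).image (fun i => P.E (3*i+5)))))).edges := by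
        intro hmem
        exact (mem_delE_edges.mp hmem).2 (Finset.mem_insert_self _ _)
      exact deg_le_one hsub2 hp hdead
    · subst h
      have hp := P.pairV hreg 1
      have hdead : P.E (1+1) ∉ ((H.delV X).delE (insert (P.E 0) (insert (P.E 2)
          ((Finset.range (r-1)).image (fun i => P.E (3*i+5)))))).edges := by
        intro hmem
        exact (mem_delE_edges.mp hmem).2
          (Finset.mem_insert_of_mem (Finset.mem_insert_self _ _))
      exact deg_le_one hsub2 (fun h hh hz => (hp h hh hz).symm) hdead
    · exact absurd h hxne
  · have hnot2 : P.E 2 ∉ (Finset.range (r-1)).image (fun i => P.E (3*i+5)) := by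
      intro hmem
      obtain ⟨i, hi, hEq⟩ := Finset.mem_image.mp hmem
      rw [Finset.mem_range] at hi
      have := hEnat (3*i+5) 2 (by omega) (by omega) hEq
      omega
    have hnot0 : P.E 0 ∉ insert (P.E 2) ((Finset.range (r-1)).image (fun i => P.E (3*i+5))) := by
      intro hmem
      rcases Finset.mem_insert.mp hmem with h | hmem
      · have := hEnat 0 2 (by omega) (by omega) h
        omega
      · obtain ⟨i, hi, hEq⟩ := Finset.mem_image.mp hmem
        rw [Finset.mem_range] at hi
        have := hEnat (3*i+5) 0 (by omega) (by omega) hEq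
        omega
    have hcQ : ((Finset.range (r-1)).image (fun i => P.E (3*i+5))).card = r - 1 := by
      rw [Finset.card_image_of_injOn, Finset.card_range]
      intro i hi j hj hEq
      rw [Finset.mem_coe, Finset.mem_range] at hi hj
      have := hEnat _ _ (by omega) (by omega) hEq
      omega
    rw [Finset.card_insert_of_notMem hnot0, Finset.card_insert_of_notMem hnot2, hcQ,
      Finset.card_singleton]
    omega
  · calc X.card ≤ (insert z3 ((Finset.range r).image (fun i => P.V (3*i+4)))).card + 1 :=
        Finset.card_insert_le _ _
    _ ≤ ((Finset.range r).image (fun i => P.V (3*i+4))).card + 1 + 1 := by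
        have := Finset.card_insert_le z3 ((Finset.range r).image (fun i => P.V (3*i+4)))
        omega
    _ ≤ r + 2 := by
        have := Finset.card_image_le (f := fun i => P.V (3*i+4)) (s := Finset.range r)
        rw [Finset.card_range] at this
        omega
  · omega
  · exact IH

lemma branch6C {H : FinHypergraph α} (P : Pkg H) (hu : H.TriUniform)
    (hreg : ∀ e ∈ H.edges, ∀ z ∈ e, H.degree z = 2) (hk5 : 5 ≤ P.k)
    (t0 : α) (ht0cov : ∀ x ∈ P.E 0, x = P.V 0 ∨ x = P.V 1 ∨ x = t0)
    (t2 : α)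
    (w1 p w3 : Finset α) (z1 z3 : α)
    (hw1E : w1 ∈ H.edges) (hpE : p ∈ H.edges) (hw3E : w3 ∈ H.edges)
    (hw1C : ∀ j, w1 ≠ P.E j) (hpC : ∀ j, p ≠ P.E j) (hw3C : ∀ j, w3 ≠ P.E j)
    (ht0pair : ∀ h ∈ H.edges, t0 ∈ h → h = P.E 0 ∨ h = w1)
    (ht2w3 : t2 ∈ w3)
    (ht2pair : ∀ h ∈ H.edges, t2 ∈ h → h = P.E 2 ∨ h = w3)
    (hz1w1 : z1 ∈ w1) (hz1p : z1 ∈ p) (hw1p : w1 ≠ p)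
    (hz1pair : ∀ h ∈ H.edges, z1 ∈ h → h = w1 ∨ h = p)
    (hz3w3 : z3 ∈ w3) (hz3p : z3 ∈ p) (hw3p : w3 ≠ p)
    (hz3pair : ∀ h ∈ H.edges, z3 ∈ h → h = w3 ∨ h = p)
    (hz3t2 : z3 ≠ t2) (hw1w3 : w1 ≠ w3)
    (IH : ∀ H' : FinHypergraph α, H'.edges ⊆ H.edges → H'.edges.card + 1 ≤ H.edges.card →
        ∃ S, H'.IsFVS S ∧ 3 * S.card ≤ H'.edges.card) :
    ∃ S, H.IsFVS S ∧ 3 * S.card ≤ H.edges.card := by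
  have hk3 := P.hk
  have hEnat : ∀ a b, a < P.k → b < P.k → P.E a = P.E b → a = b := by
    intro a b ha hb hEq
    exact P.modlt ha hb (P.injE a b hEq)
  have hz1notE : ∀ j, z1 ∉ P.E j := by
    intro j hzj
    rcases hz1pair _ (P.hE j) hzj with h | h
    · exact hw1C j h.symm
    · exact hpC j h.symm
  have hpairV2 : ∀ h ∈ H.edges, P.V 2 ∈ h → h = P.E 1 ∨ h = P.E 2 := by
    have := P.pairV hreg 1
    norm_num at this
    exact this
  set X : Finset α := insert z1 {P.V 2} with hX
  have hz1X : z1 ∈ X := Finset.mem_insert_self _ _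
  have hV2X : P.V 2 ∈ X := Finset.mem_insert_of_mem (Finset.mem_singleton_self _)
  have hXmem : ∀ x ∈ X, x = z1 ∨ x = P.V 2 := by
    intro x hx
    rcases Finset.mem_insert.mp hx with rfl | hx
    · exact Or.inl rfl
    · exact Or.inr (Finset.mem_singleton.mp hx)
  have hdeadW1 : w1 ∉ (H.delV X).edges := fun hmem => (mem_delV_edges.mp hmem).2 z1 hz1w1 hz1X
  have hdeadP : p ∉ (H.delV X).edges := fun hmem => (mem_delV_edges.mp hmem).2 z1 hz1p hz1X
  have hV2E1 : P.V 2 ∈ P.E 1 := P.hV 2 |> fun _ => by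
    have := P.hV1 1
    norm_num at this
    exact this
  have hdeadE1 : P.E 1 ∉ (H.delV X).edges :=
    fun hmem => (mem_delV_edges.mp hmem).2 _ hV2E1 hV2X
  have hdeadE2 : P.E 2 ∉ (H.delV X).edges :=
    fun hmem => (mem_delV_edges.mp hmem).2 _ (P.hV 2) hV2X
  have hsubV : (H.delV X).edges ⊆ H.edges := delV_edges_subset H X
  obtain ⟨u3, hu3w, hu3t2, hu3z3, hu3cov⟩ :=
    third_exists (hu w3 hw3E) ht2w3 hz3w3 (Ne.symm hz3t2)
  apply bundle (X := X)
    (D := insert p (insert w1 (insert (P.E 1) {P.E 2})))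
    (Q1 := insert (P.E 0) {w3}) (Q2 := ∅) 2
  · intro x hx
    rcases hXmem x hx with rfl | rfl
    · exact H.mem_verts w1 hw1E _ hz1w1
    · exact H.mem_verts _ (P.hE 2) _ (P.hV 2)
  · intro d hd
    rcases Finset.mem_insert.mp hd with rfl | hd
    · exact hpE
    rcases Finset.mem_insert.mp hd with rfl | hd
    · exact hw1E
    rcases Finset.mem_insert.mp hd with rfl | hd
    · exact P.hE 1
    rw [Finset.mem_singleton] at hd; subst hd
    exact P.hE 2
  · intro d hd
    rcases Finset.mem_insert.mp hd with rfl | hd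
    · exact ⟨z1, hz1p, hz1X⟩
    rcases Finset.mem_insert.mp hd with rfl | hd
    · exact ⟨z1, hz1w1, hz1X⟩
    rcases Finset.mem_insert.mp hd with rfl | hd
    · exact ⟨P.V 2, hV2E1, hV2X⟩
    rw [Finset.mem_singleton] at hd; subst hd
    exact ⟨P.V 2, P.hV 2, hV2X⟩
  · have hE12 : P.E 1 ≠ P.E 2 := fun h => by
      have := hEnat 1 2 (by omega) (by omega) h
      omega
    have h4 : P.E 1 ∉ ({P.E 2} : Finset (Finset α)) := by
      rw [Finset.mem_singleton]; exact hE12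
    have h3 : w1 ∉ insert (P.E 1) ({P.E 2} : Finset (Finset α)) := by
      intro hmem
      rcases Finset.mem_insert.mp hmem with h | hmem
      · exact hw1C 1 h
      · rw [Finset.mem_singleton] at hmem
        exact hw1C 2 hmem
    have h2 : p ∉ insert w1 (insert (P.E 1) ({P.E 2} : Finset (Finset α))) := by
      intro hmem
      rcases Finset.mem_insert.mp hmem with h | hmem
      · exact hw1p h.symm
      rcases Finset.mem_insert.mp hmem with h | hmem
      · exact hpC 1 h
      · rw [Finset.mem_singleton] at hmem
        exact hpC 2 hmem
    rw [Finset.card_insert_of_notMem h2, Finset.card_insert_of_notMem h3,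
      Finset.card_insert_of_notMem h4, Finset.card_singleton]
  · intro q hq
    rcases Finset.mem_insert.mp hq with rfl | hq
    · refine mem_delV_edges.mpr ⟨P.hE 0, ?_⟩
      intro x hx hxX
      rcases hXmem x hxX with rfl | rfl
      · exact hz1notE 0 hx
      · rcases hpairV2 _ (P.hE 0) hx with h | h
        · have := hEnat 0 1 (by omega) (by omega) h
          omega
        · have := hEnat 0 2 (by omega) (by omega) h
          omega
    rw [Finset.mem_singleton] at hq; subst hq
    refine mem_delV_edges.mpr ⟨hw3E, ?_⟩
    intro x hx hxX
    rcases hXmem x hxX with rfl | rfl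
    · rcases hz1pair _ hw3E hx with h | h
      · exact hw1w3 h.symm
      · exact hw3p h
    · rcases hpairV2 _ hw3E hx with h | h
      · exact hw3C 1 h
      · exact hw3C 2 h
  · intro q hq
    rcases Finset.mem_insert.mp hq with rfl | hq
    · apply prune_card (t := P.V 0)
      intro x hx hxne
      rcases ht0cov x hx with h | rfl | rfl
      · exact absurd h hxne
      · have hp := P.pairV hreg 0
        rw [zero_add] at hp
        exact deg_le_one hsubV (fun h hh hz => (hp h hh hz).symm) hdeadE1
      · exact deg_le_one hsubV (fun h hh hz => (ht0pair h hh hz).symm) hdeadW1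
    rw [Finset.mem_singleton] at hq; subst hq
    apply prune_card (t := u3)
    intro x hx hxne
    rcases hu3cov x hx with rfl | rfl | h
    · exact deg_le_one hsubV ht2pair hdeadE2
    · exact deg_le_one hsubV (fun h hh hz => (hz3pair h hh hz).symm) hdeadP
    · exact absurd h hxne
  · simp
  · intro q hq
    simp at hq
  · have : P.E 0 ∉ ({w3} : Finset (Finset α)) := by
      rw [Finset.mem_singleton]
      intro h
      exact hw3C 0 h.symm
    rw [Finset.card_insert_of_notMem this, Finset.card_singleton]
    simp
  · calc X.card ≤ ({P.V 2} : Finset α).card + 1 := Finset.card_insert_le _ _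
    _ ≤ 2 := by rw [Finset.card_singleton]
  · omega
  · exact IH

lemma branchK4iib {H : FinHypergraph α} (P : Pkg H) (hu : H.TriUniform)
    (hreg : ∀ e ∈ H.edges, ∀ z ∈ e, H.degree z = 2) (hk4 : P.k = 4)
    (f g : Finset α) (x0 x2 x1 x3 : α)
    (hfE : f ∈ H.edges) (hgE : g ∈ H.edges)
    (hfC : ∀ j, f ≠ P.E j) (hgC : ∀ j, g ≠ P.E j) (hfg : f ≠ g)
    (hx0f : x0 ∈ f) (hx0E : x0 ∈ P.E 0) (hx2f : x2 ∈ f) (hx2E : x2 ∈ P.E 2) (hx02 : x0 ≠ x2)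
    (hx1g : x1 ∈ g) (hx1E : x1 ∈ P.E 1) (hx3g : x3 ∈ g) (hx3E : x3 ∈ P.E 3) (hx13 : x1 ≠ x3)
    (IH : ∀ H' : FinHypergraph α, H'.edges ⊆ H.edges → H'.edges.card + 1 ≤ H.edges.card →
        ∃ S, H'.IsFVS S ∧ 3 * S.card ≤ H'.edges.card) :
    ∃ S, H.IsFVS S ∧ 3 * S.card ≤ H.edges.card := by
  have hk3 := P.hk
  have hEnat : ∀ a b, a < P.k → b < P.k → P.E a = P.E b → a = b := by
    intro a b ha hb hEq
    exact P.modlt ha hb (P.injE a b hEq)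
  have hpx0 : ∀ h ∈ H.edges, x0 ∈ h → h = P.E 0 ∨ h = f :=
    pair_eq (le_of_eq (hreg _ (P.hE 0) _ hx0E)) (P.hE 0) hfE hx0E hx0f (Ne.symm (hfC 0))
  have hpx2 : ∀ h ∈ H.edges, x2 ∈ h → h = P.E 2 ∨ h = f :=
    pair_eq (le_of_eq (hreg _ (P.hE 2) _ hx2E)) (P.hE 2) hfE hx2E hx2f (Ne.symm (hfC 2))
  have hpx1 : ∀ h ∈ H.edges, x1 ∈ h → h = P.E 1 ∨ h = g :=
    pair_eq (le_of_eq (hreg _ (P.hE 1) _ hx1E)) (P.hE 1) hgE hx1E hx1g (Ne.symm (hgC 1))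
  have hpx3 : ∀ h ∈ H.edges, x3 ∈ h → h = P.E 3 ∨ h = g :=
    pair_eq (le_of_eq (hreg _ (P.hE 3) _ hx3E)) (P.hE 3) hgE hx3E hx3g (Ne.symm (hgC 3))
  have hpV1 : ∀ h ∈ H.edges, P.V 1 ∈ h → h = P.E 0 ∨ h = P.E 1 := by
    have := P.pairV hreg 0
    rw [zero_add] at this
    exact this
  have hpV3 : ∀ h ∈ H.edges, P.V 3 ∈ h → h = P.E 2 ∨ h = P.E 3 := by
    have := P.pairV hreg 2
    norm_num at this
    exact this
  have hV13 : P.V 1 ≠ P.V 3 := by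
    intro h
    have := P.modlt (a := 1) (b := 3) (by omega) (by omega) (P.injV 1 3 h)
    omega
  set X : Finset α := insert (P.V 1) {P.V 3} with hX
  have hV1X : P.V 1 ∈ X := Finset.mem_insert_self _ _
  have hV3X : P.V 3 ∈ X := Finset.mem_insert_of_mem (Finset.mem_singleton_self _)
  have hXmem : ∀ x ∈ X, x = P.V 1 ∨ x = P.V 3 := by
    intro x hx
    rcases Finset.mem_insert.mp hx with rfl | hx
    · exact Or.inl rfl
    · exact Or.inr (Finset.mem_singleton.mp hx)
  have hV1E0 : P.V 1 ∈ P.E 0 := by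
    have := P.hV1 0
    rwa [zero_add] at this
  have hV3E2 : P.V 3 ∈ P.E 2 := by
    have := P.hV1 2
    norm_num at this
    exact this
  have hdead0 : P.E 0 ∉ (H.delV X).edges :=
    fun hmem => (mem_delV_edges.mp hmem).2 _ hV1E0 hV1X
  have hdead1 : P.E 1 ∉ (H.delV X).edges :=
    fun hmem => (mem_delV_edges.mp hmem).2 _ (P.hV 1) hV1X
  have hdead2 : P.E 2 ∉ (H.delV X).edges :=
    fun hmem => (mem_delV_edges.mp hmem).2 _ hV3E2 hV3X
  have hdead3 : P.E 3 ∉ (H.delV X).edges :=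
    fun hmem => (mem_delV_edges.mp hmem).2 _ (P.hV 3) hV3X
  have hsubV : (H.delV X).edges ⊆ H.edges := delV_edges_subset H X
  obtain ⟨uf, hufw, huf0, huf2, hufcov⟩ := third_exists (hu f hfE) hx0f hx2f hx02
  obtain ⟨ug, hugw, hug1, hug3, hugcov⟩ := third_exists (hu g hgE) hx1g hx3g hx13
  apply bundle (X := X)
    (D := insert (P.E 0) (insert (P.E 1) (insert (P.E 2) {P.E 3})))
    (Q1 := insert f {g}) (Q2 := ∅) 2
  · intro x hx
    rcases hXmem x hx with rfl | rfl
    · exact H.mem_verts _ (P.hE 1) _ (P.hV 1)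
    · exact H.mem_verts _ (P.hE 3) _ (P.hV 3)
  · intro d hd
    rcases Finset.mem_insert.mp hd with rfl | hd
    · exact P.hE 0
    rcases Finset.mem_insert.mp hd with rfl | hd
    · exact P.hE 1
    rcases Finset.mem_insert.mp hd with rfl | hd
    · exact P.hE 2
    rw [Finset.mem_singleton] at hd; subst hd
    exact P.hE 3
  · intro d hd
    rcases Finset.mem_insert.mp hd with rfl | hd
    · exact ⟨P.V 1, hV1E0, hV1X⟩
    rcases Finset.mem_insert.mp hd with rfl | hd
    · exact ⟨P.V 1, P.hV 1, hV1X⟩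
    rcases Finset.mem_insert.mp hd with rfl | hd
    · exact ⟨P.V 3, hV3E2, hV3X⟩
    rw [Finset.mem_singleton] at hd; subst hd
    exact ⟨P.V 3, P.hV 3, hV3X⟩
  · have hne : ∀ a b : ℕ, a < 4 → b < 4 → a ≠ b → P.E a ≠ P.E b := by
      intro a b ha hb hab h
      exact hab (hEnat a b (by omega) (by omega) h)
    have h4 : P.E 2 ∉ ({P.E 3} : Finset (Finset α)) := by
      rw [Finset.mem_singleton]; exact hne 2 3 (by omega) (by omega) (by omega)
    have h3 : P.E 1 ∉ insert (P.E 2) ({P.E 3} : Finset (Finset α)) := by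
      intro hmem
      rcases Finset.mem_insert.mp hmem with h | hmem
      · exact hne 1 2 (by omega) (by omega) (by omega) h
      · rw [Finset.mem_singleton] at hmem
        exact hne 1 3 (by omega) (by omega) (by omega) hmem
    have h2 : P.E 0 ∉ insert (P.E 1) (insert (P.E 2) ({P.E 3} : Finset (Finset α))) := by
      intro hmem
      rcases Finset.mem_insert.mp hmem with h | hmem
      · exact hne 0 1 (by omega) (by omega) (by omega) h
      rcases Finset.mem_insert.mp hmem with h | hmem
      · exact hne 0 2 (by omega) (by omega) (by omega) h
      · rw [Finset.mem_singleton] at hmem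
        exact hne 0 3 (by omega) (by omega) (by omega) hmem
    rw [Finset.card_insert_of_notMem h2, Finset.card_insert_of_notMem h3,
      Finset.card_insert_of_notMem h4, Finset.card_singleton]
  · intro q hq
    have hqsurv : ∀ q' : Finset α, q' ∈ H.edges → (∀ j, q' ≠ P.E j) →
        q' ∈ (H.delV X).edges := by
      intro q' hq'E hq'C
      refine mem_delV_edges.mpr ⟨hq'E, ?_⟩
      intro x hx hxX
      rcases hXmem x hxX with rfl | rfl
      · rcases hpV1 q' hq'E hx with h | h
        · exact hq'C 0 h
        · exact hq'C 1 h
      · rcases hpV3 q' hq'E hx with h | h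
        · exact hq'C 2 h
        · exact hq'C 3 h
    rcases Finset.mem_insert.mp hq with rfl | hq
    · exact hqsurv q hfE hfC
    rw [Finset.mem_singleton] at hq
    rw [hq]
    exact hqsurv g hgE hgC
  · intro q hq
    rcases Finset.mem_insert.mp hq with rfl | hq
    · apply prune_card (t := uf)
      intro x hx hxne
      rcases hufcov x hx with rfl | rfl | h
      · exact deg_le_one hsubV hpx0 hdead0
      · exact deg_le_one hsubV hpx2 hdead2
      · exact absurd h hxne
    rw [Finset.mem_singleton] at hq; subst hq
    apply prune_card (t := ug)
    intro x hx hxne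
    rcases hugcov x hx with rfl | rfl | h
    · exact deg_le_one hsubV hpx1 hdead1
    · exact deg_le_one hsubV hpx3 hdead3
    · exact absurd h hxne
  · simp
  · intro q hq
    simp at hq
  · have : f ∉ ({g} : Finset (Finset α)) := by
      rw [Finset.mem_singleton]; exact hfg
    rw [Finset.card_insert_of_notMem this, Finset.card_singleton]
    simp
  · calc X.card ≤ ({P.V 3} : Finset α).card + 1 := Finset.card_insert_le _ _
    _ ≤ 2 := by rw [Finset.card_singleton]
  · omega
  · exact IH

def Pkg.shift {H : FinHypergraph α} (P : Pkg H) : Pkg H where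
  k := P.k
  V := fun s => P.V (s + 1)
  E := fun s => P.E (s + 1)
  hk := P.hk
  hE := fun s => P.hE (s + 1)
  hV := fun s => P.hV (s + 1)
  hV1 := fun s => P.hV1 (s + 1)
  perV := fun s => by
    have := P.perV (s + 1)
    rwa [show s + 1 + P.k = s + P.k + 1 from by omega] at this
  perE := fun s => by
    have := P.perE (s + 1)
    rwa [show s + 1 + P.k = s + P.k + 1 from by omega] at this
  injV := fun s u h => Nat.ModEq.add_right_cancel' 1 (P.injV (s + 1) (u + 1) h)
  injE := fun s u h => Nat.ModEq.add_right_cancel' 1 (P.injE (s + 1) (u + 1) h)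
  hmin := P.hmin

lemma routeMod1 {H : FinHypergraph α} (P : Pkg H) (hu : H.TriUniform) (hl : H.Linear)
    (hreg : ∀ e ∈ H.edges, ∀ z ∈ e, H.degree z = 2)
    (r : ℕ) (hr : 1 ≤ r) (hkval : P.k = 3 * r + 1)
    (hnd : ∀ f ∈ H.edges, (∀ j, f ≠ P.E j) → ∀ x y : α, x ∈ f → x ∈ P.E 0 → y ∈ f →
      y ∈ P.E 2 → False)
    (IH : ∀ H' : FinHypergraph α, H'.edges ⊆ H.edges → H'.edges.card + 1 ≤ H.edges.card →
        ∃ S, H'.IsFVS S ∧ 3 * S.card ≤ H'.edges.card) :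
    ∃ S, H.IsFVS S ∧ 3 * S.card ≤ H.edges.card := by
  have hk3 := P.hk
  have hTex : ∀ s : ℕ, ∃ t, t ∈ P.E s ∧ t ≠ P.V s ∧ t ≠ P.V (s + 1) ∧
      ∀ x ∈ P.E s, x = P.V s ∨ x = P.V (s + 1) ∨ x = t :=
    fun s => third_exists (hu _ (P.hE s)) (P.hV s) (P.hV1 s) (P.VsuccNe s)
  choose T hT1 hT2 hT3 hTcov using hTex
  have houtC : ∀ s, s < P.k → ∀ w' : Finset α, w' ∈ H.edges → T s ∈ w' → w' ≠ P.E s →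
      ∀ j, w' ≠ P.E j := by
    intro s hs w' hw'E hTw' hw'ne j hEq
    have htj : T s ∈ P.E (j % P.k) := by
      rw [← P.Emod]
      exact hEq ▸ hTw'
    have := P.TnotinE hreg hl s (j % P.k) hs (Nat.mod_lt _ P.kpos) (T s) (hT1 s) (hT2 s)
      (hT3 s) htj
    apply hw'ne
    rw [hEq, P.Emod j, this]
  obtain ⟨w, hwE, hT0w, hwne, hwpair⟩ :=
    exists_partner (hreg _ (P.hE 0) _ (hT1 0)) (P.hE 0) (hT1 0)
  have hwC : ∀ j, w ≠ P.E j := houtC 0 (by omega) w hwE hT0w hwne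
  have hwcard : (1:ℕ) < w.card := by rw [hu w hwE]; omega
  obtain ⟨z, hzw, hzT0⟩ := Finset.exists_mem_ne hwcard (T 0)
  obtain ⟨p, hpE, hzp, hpw, hppair⟩ := exists_partner (hreg w hwE z hzw) hwE hzw
  have hpC : ∀ j, p ≠ P.E j := by
    intro j hEq
    have hzj : z ∈ P.E (j % P.k) := by
      rw [← P.Emod]
      exact hEq ▸ hzp
    set j' := j % P.k with hj'
    have hj'lt : j' < P.k := Nat.mod_lt _ P.kpos
    by_cases hj0 : j' = 0
    · rw [hj0] at hzj
      exact hzT0 (inter_unique hl hwE (P.hE 0) hwne hzw hzj hT0w (hT1 0))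
    · rcases Nat.lt_or_ge P.k 5 with hk4 | hk5
      · -- k = 4
        have hk4' : P.k = 4 := by omega
        have hr1 : r = 1 := by omega
        rcases (by omega : j' = 1 ∨ j' = 2 ∨ j' = 3) with hj | hj | hj
        · rw [hj] at hzj
          exact P.no_attach hreg 0 1 w (T 0) z hwE hwC (by omega) (by omega) hT0w (hT1 0)
            hzw (by rw [zero_add]; exact hzj)
        · rw [hj] at hzj
          exact hnd w hwE hwC (T 0) z hT0w (hT1 0) hzw hzj
        · rw [hj] at hzj
          apply P.no_attach hreg 3 1 w z (T 0) hwE hwC (by omega) (by omega) hzw hzj hT0w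
          rw [show (3:ℕ) + 1 = 0 + P.k from by omega]
          rw [P.perE]
          exact hT1 0
      · have := P.attach_eq hreg hk5 w hwE hwC 0 j' (by omega) hj'lt (T 0) z hT0w (hT1 0)
          hzw hzj
        exact hj0 this.symm
  exact branchR1 P hreg r hr hkval T hTcov (T 0) (hTcov 0) w p z hwE hpE hwC hpC hwpair
    hzw hzp (Ne.symm hpw) hppair IH

lemma pickZ {H : FinHypergraph α} (P : Pkg H) (hu : H.TriUniform) (hl : H.Linear)
    (hreg : ∀ e ∈ H.edges, ∀ z ∈ e, H.degree z = 2)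
    (t : α) (w avoid : Finset α) (hwE : w ∈ H.edges) (htw : t ∈ w) (hwav : w ≠ avoid) :
    ∃ z p, z ∈ w ∧ z ≠ t ∧ p ∈ H.edges ∧ z ∈ p ∧ p ≠ w ∧ p ≠ avoid ∧
      (∀ h ∈ H.edges, z ∈ h → h = w ∨ h = p) := by
  have hwcard : (1:ℕ) < w.card := by rw [hu w hwE]; omega
  obtain ⟨a, haw, hat⟩ := Finset.exists_mem_ne hwcard t
  obtain ⟨pa, hpaE, hapa, hpaw, hpapair⟩ := exists_partner (hreg w hwE a haw) hwE haw
  by_cases hpav : pa = avoid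
  · obtain ⟨b, hbw, hbt, hba, hbcov⟩ := third_exists (hu w hwE) htw haw (Ne.symm hat)
    obtain ⟨pb, hpbE, hbpb, hpbw, hpbpair⟩ := exists_partner (hreg w hwE b hbw) hwE hbw
    refine ⟨b, pb, hbw, hbt, hpbE, hbpb, hpbw, ?_, hpbpair⟩
    intro hpbav
    -- then a and b both lie in avoid, contradicting linearity
    have hA : a ∈ avoid := hpav ▸ hapa
    have hB : b ∈ avoid := hpbav ▸ hbpb
    have havE : avoid ∈ H.edges := hpav ▸ hpaE
    exact hba (inter_unique hl hwE havE hwav hbw hB haw hA)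
  · exact ⟨a, pa, haw, hat, hpaE, hapa, hpaw, hpav, hpapair⟩

lemma routeMod2 {H : FinHypergraph α} (P : Pkg H) (hu : H.TriUniform) (hl : H.Linear)
    (hreg : ∀ e ∈ H.edges, ∀ z ∈ e, H.degree z = 2)
    (r : ℕ) (hr : 1 ≤ r) (hkval : P.k = 3 * r + 2)
    (IH : ∀ H' : FinHypergraph α, H'.edges ⊆ H.edges → H'.edges.card + 1 ≤ H.edges.card →
        ∃ S, H'.IsFVS S ∧ 3 * S.card ≤ H'.edges.card) :
    ∃ S, H.IsFVS S ∧ 3 * S.card ≤ H.edges.card := by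
  have hk3 := P.hk
  have hk5 : 5 ≤ P.k := by omega
  have hTex : ∀ s : ℕ, ∃ t, t ∈ P.E s ∧ t ≠ P.V s ∧ t ≠ P.V (s + 1) ∧
      ∀ x ∈ P.E s, x = P.V s ∨ x = P.V (s + 1) ∨ x = t :=
    fun s => third_exists (hu _ (P.hE s)) (P.hV s) (P.hV1 s) (P.VsuccNe s)
  choose T hT1 hT2 hT3 hTcov using hTex
  have houtC : ∀ s, s < P.k → ∀ w' : Finset α, w' ∈ H.edges → T s ∈ w' → w' ≠ P.E s →
      ∀ j, w' ≠ P.E j := by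
    intro s hs w' hw'E hTw' hw'ne j hEq
    have htj : T s ∈ P.E (j % P.k) := by
      rw [← P.Emod]
      exact hEq ▸ hTw'
    have := P.TnotinE hreg hl s (j % P.k) hs (Nat.mod_lt _ P.kpos) (T s) (hT1 s) (hT2 s)
      (hT3 s) htj
    apply hw'ne
    rw [hEq, P.Emod j, this]
  obtain ⟨w1, hw1E, hT0w1, hw1ne, hw1pair⟩ :=
    exists_partner (hreg _ (P.hE 0) _ (hT1 0)) (P.hE 0) (hT1 0)
  have hw1C : ∀ j, w1 ≠ P.E j := houtC 0 (by omega) w1 hw1E hT0w1 hw1ne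
  obtain ⟨w3, hw3E, hT2w3, hw3ne, hw3pair⟩ :=
    exists_partner (hreg _ (P.hE 2) _ (hT1 2)) (P.hE 2) (hT1 2)
  have hw3C : ∀ j, w3 ≠ P.E j := houtC 2 (by omega) w3 hw3E hT2w3 hw3ne
  have hw1w3 : w1 ≠ w3 := by
    intro hEq
    have := P.attach_eq hreg hk5 w1 hw1E hw1C 0 2 (by omega) (by omega) (T 0) (T 2) hT0w1
      (hT1 0) (hEq ▸ hT2w3) (hT1 2)
    omega
  obtain ⟨z1, p1, hz1w1, hz1T0, hp1E, hz1p1, hp1w1, hp1w3, hz1pair⟩ :=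
    pickZ P hu hl hreg (T 0) w1 w3 hw1E hT0w1 hw1w3
  obtain ⟨z3, p3, hz3w3, hz3T2, hp3E, hz3p3, hp3w3, hp3w1, hz3pair⟩ :=
    pickZ P hu hl hreg (T 2) w3 w1 hw3E hT2w3 (Ne.symm hw1w3)
  have hpC : ∀ (zz : α) (ww pp : Finset α), zz ∈ ww → zz ≠ T 0 ∨ zz ≠ T 2 →
      True := fun _ _ _ _ _ => trivial
  have hp1C : ∀ j, p1 ≠ P.E j := by
    intro j hEq
    have hzj : z1 ∈ P.E (j % P.k) := by
      rw [← P.Emod]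
      exact hEq ▸ hz1p1
    set j' := j % P.k with hj'
    have hj'lt : j' < P.k := Nat.mod_lt _ P.kpos
    by_cases hj0 : j' = 0
    · rw [hj0] at hzj
      exact hz1T0 (inter_unique hl hw1E (P.hE 0) hw1ne hz1w1 hzj hT0w1 (hT1 0))
    · have := P.attach_eq hreg hk5 w1 hw1E hw1C 0 j' (by omega) hj'lt (T 0) z1 hT0w1 (hT1 0)
        hz1w1 hzj
      exact hj0 this.symm
  have hp3C : ∀ j, p3 ≠ P.E j := by
    intro j hEq
    have hzj : z3 ∈ P.E (j % P.k) := by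
      rw [← P.Emod]
      exact hEq ▸ hz3p3
    set j' := j % P.k with hj'
    have hj'lt : j' < P.k := Nat.mod_lt _ P.kpos
    by_cases hj2 : j' = 2
    · rw [hj2] at hzj
      exact hz3T2 (inter_unique hl hw3E (P.hE 2) hw3ne hz3w3 hzj hT2w3 (hT1 2))
    · have := P.attach_eq hreg hk5 w3 hw3E hw3C 2 j' (by omega) hj'lt (T 2) z3 hT2w3 (hT1 2)
        hz3w3 hzj
      exact hj2 this.symm
  by_cases hpp : p1 = p3
  · -- six-cycle configuration
    subst hpp
    exact branch6C P hu hreg hk5 (T 0) (hTcov 0) (T 2) w1 p1 w3 z1 z3 hw1E hp1E hw3E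
      hw1C hp1C hw3C hw1pair hT2w3 hw3pair hz1w1 hz1p1 (Ne.symm hp1w1) hz1pair hz3w3 hz3p3
      (Ne.symm hp3w3) hz3pair hz3T2 hw1w3 IH
  · exact branchR2 P hreg r hr hkval T hTcov (T 0) (hTcov 0) (T 2) (hTcov 2) w1 p1 w3 p3 z1 z3
      hw1E hp1E hw3E hp3E hw1C hp1C hw3C hp3C hw1pair hw3pair hz1w1 hz1p1 (Ne.symm hp1w1)
      hz1pair hz3w3 hz3p3 (Ne.symm hp3w3) hz3pair hw1w3 hp1w3 hp3w1 hpp IH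

theorem case5 (H : FinHypergraph α) (hu : H.TriUniform) (hl : H.Linear)
    (hcyc : H.HasCycle)
    (hreg : ∀ e ∈ H.edges, ∀ z ∈ e, H.degree z = 2)
    (IH : ∀ H' : FinHypergraph α, H'.edges ⊆ H.edges → H'.edges.card + 1 ≤ H.edges.card →
        ∃ S, H'.IsFVS S ∧ 3 * S.card ≤ H'.edges.card) :
    ∃ S, H.IsFVS S ∧ 3 * S.card ≤ H.edges.card := by
  obtain ⟨P⟩ := exists_pkg hl hcyc
  have hk3 := P.hk
  by_cases h0 : P.k % 3 = 0
  · have hTex : ∀ s : ℕ, ∃ t, t ∈ P.E s ∧ t ≠ P.V s ∧ t ≠ P.V (s + 1) ∧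
        ∀ x ∈ P.E s, x = P.V s ∨ x = P.V (s + 1) ∨ x = t :=
      fun s => third_exists (hu _ (P.hE s)) (P.hV s) (P.hV1 s) (P.VsuccNe s)
    choose T hT1 hT2 hT3 hTcov using hTex
    exact branchR0 P hreg (P.k / 3) (by omega) (by omega) T hTcov IH
  by_cases h1 : P.k % 3 = 1
  · by_cases hk4 : P.k = 4
    · by_cases hnd02 : ∀ f ∈ H.edges, (∀ j, f ≠ P.E j) → ∀ x y : α, x ∈ f → x ∈ P.E 0 →
          y ∈ f → y ∈ P.E 2 → False
      · exact routeMod1 P hu hl hreg 1 (by omega) (by omega) hnd02 IH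
      · push_neg at hnd02
        obtain ⟨f, hfE, hfC, x0, x2, hx0f, hx0E, hx2f, hx2E⟩ := hnd02
        have hx2E := hx2E.1
        by_cases hnd13 : ∀ g ∈ H.edges, (∀ j, g ≠ P.E j) → ∀ x y : α, x ∈ g → x ∈ P.E 1 →
            y ∈ g → y ∈ P.E 3 → False
        · apply routeMod1 P.shift hu hl hreg 1 (by omega) ?_ ?_ IH
          · show P.k = 3 * 1 + 1
            omega
          · intro f' hf'E hf'C x y hxf hx1 hyf hy3
            refine hnd13 f' hf'E ?_ x y hxf hx1 hyf hy3
            intro j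
            have hthis : f' ≠ P.E (j + P.k - 1 + 1) := hf'C (j + P.k - 1)
            rwa [show j + P.k - 1 + 1 = j + P.k from by omega, P.perE] at hthis
        · push_neg at hnd13
          obtain ⟨g, hgE, hgC, x1, x3, hx1g, hx1E, hx3g, hx3E⟩ := hnd13
          have hx3E := hx3E.1
          have hx02 : x0 ≠ x2 := by
            intro hEq
            exact P.no_chord hreg 0 2 x0 (by omega) (by omega) hx0E
              (show x0 ∈ P.E (0 + 2) from hEq ▸ hx2E)
          have hx13 : x1 ≠ x3 := by
            intro hEq
            exact P.no_chord hreg 1 2 x1 (by omega) (by omega) hx1E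
              (show x1 ∈ P.E (1 + 2) from hEq ▸ hx3E)
          have hfg : f ≠ g := by
            intro hEq
            subst hEq
            exact P.no_attach hreg 0 1 f x0 x1 hfE hfC (by omega) (by omega) hx0f hx0E hx1g
              (show x1 ∈ P.E (0 + 1) from hx1E)
          exact branchK4iib P hu hreg hk4 f g x0 x2 x1 x3 hfE hgE hfC hgC hfg hx0f hx0E
            hx2f hx2E hx02 hx1g hx1E hx3g hx3E hx13 IH
    · have hnd : ∀ f ∈ H.edges, (∀ j, f ≠ P.E j) → ∀ x y : α, x ∈ f → x ∈ P.E 0 →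
          y ∈ f → y ∈ P.E 2 → False := by
        intro f hfE hfC x y hxf hx0 hyf hy2
        have := P.attach_eq hreg (by omega) f hfE hfC 0 2 (by omega) (by omega) x y hxf hx0
          hyf hy2
        omega
      exact routeMod1 P hu hl hreg (P.k / 3) (by omega) (by omega) hnd IH
  · exact routeMod2 P hu hl hreg (P.k / 3) (by omega) (by omega) IH

theorem aux : ∀ (n : ℕ) (H : FinHypergraph α), H.TriUniform → H.Linear →
    H.edges.card ≤ n → ∃ S, H.IsFVS S ∧ 3 * S.card ≤ H.edges.card := by
  intro n
  induction n using Nat.strong_induction_on with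
  | _ n ih =>
  intro H hu hl hm
  have IH : ∀ H' : FinHypergraph α, H'.edges ⊆ H.edges → H'.edges.card + 1 ≤ H.edges.card →
      ∃ S, H'.IsFVS S ∧ 3 * S.card ≤ H'.edges.card := by
    intro H' hsub hc
    exact ih H'.edges.card (by omega) H' (triUniform_anti hsub hu) (linear_anti hsub hl) le_rfl
  by_cases hcyc : H.HasCycle
  swap
  · exact ⟨∅, isFVS_empty hcyc, by simp⟩
  by_cases hdeg3 : ∃ v, 3 ≤ H.degree v
  · -- Case 2 : a vertex of degree ≥ 3
    obtain ⟨v, hv3⟩ := hdeg3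
    have hpos : 0 < H.degree v := by omega
    rw [degree, Finset.card_pos] at hpos
    obtain ⟨g, hg⟩ := hpos
    simp only [Finset.mem_filter] at hg
    have hvvert : v ∈ H.verts := H.mem_verts g hg.1 v hg.2
    set H1 := H.delV {v} with hH1
    have hedges : H1.edges = H.edges.filter (fun e => ¬ v ∈ e) := by
      rw [hH1]
      show H.edges.filter _ = _
      apply Finset.filter_congr
      intro e he
      simp
    have hcard : H1.edges.card + H.degree v = H.edges.card := by
      rw [hedges, degree]
      rw [add_comm]
      exact Finset.card_filter_add_card_filter_not (p := fun e => v ∈ e)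
    obtain ⟨S', hS', hS'c⟩ := IH H1 (delV_edges_subset _ _) (by omega)
    refine ⟨{v} ∪ S', fvs_delV_union (by simpa using hvvert) hS', ?_⟩
    have := Finset.card_union_le ({v} : Finset α) S'
    have h1 : ({v} : Finset α).card = 1 := Finset.card_singleton v
    omega
  push_neg at hdeg3
  by_cases hpend : ∃ f ∈ H.edges, (f.filter fun z => 2 ≤ H.degree z).card ≤ 1
  · -- Case 3 : an edge on no cycle
    obtain ⟨f, hf, hval⟩ := hpend
    set H1 := H.delE {f} with hH1
    have hcard : H1.edges.card + 1 = H.edges.card := by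
      have := card_delE_eq (H := H) (Q := {f}) (by simpa using hf)
      simpa using this
    obtain ⟨S', hS', hS'c⟩ := IH H1 (delE_edges_subset _ _) (by omega)
    have hfvs : H.IsFVS S' := by
      apply fvs_of_prune (Q := {f}) _ hS'
      intro q hq
      rw [Finset.mem_singleton] at hq
      subst hq
      exact hval
    exact ⟨S', hfvs, by omega⟩
  push_neg at hpend
  by_cases hmid : ∃ u ∈ H.edges, (u.filter fun z => 2 ≤ H.degree z).card = 2
  · -- Case 4 : an edge with exactly two degree-2 vertices
    obtain ⟨u, hu_mem, hu2⟩ := hmid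
    obtain ⟨s1, s2, hs12, hfu⟩ := Finset.card_eq_two.mp hu2
    have hs1f : s1 ∈ u.filter (fun z => 2 ≤ H.degree z) := by rw [hfu]; simp
    have hs2f : s2 ∈ u.filter (fun z => 2 ≤ H.degree z) := by rw [hfu]; simp
    simp only [Finset.mem_filter] at hs1f hs2f
    have hdegs1 : H.degree s1 = 2 := le_antisymm (hdeg3 s1 |> fun h => by omega) hs1f.2
    obtain ⟨a, ha_mem, hs1a, hau, hpair1⟩ := exists_partner hdegs1 hu_mem hs1f.1
    -- a has at least two degree-2 vertices
    have ha2 : 2 ≤ (a.filter fun z => 2 ≤ H.degree z).card := by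
      have := hpend a ha_mem
      omega
    have hs1af : s1 ∈ a.filter (fun z => 2 ≤ H.degree z) := by
      simp only [Finset.mem_filter]
      exact ⟨hs1a, hs1f.2⟩
    obtain ⟨s', hs'f, hs's1⟩ := Finset.exists_mem_ne (s := a.filter fun z => 2 ≤ H.degree z) (by omega) s1
    simp only [Finset.mem_filter] at hs'f
    have hdegs' : H.degree s' = 2 := le_antisymm (hdeg3 s' |> fun h => by omega) hs'f.2
    obtain ⟨y, hy_mem, hs'y, hya, hpair'⟩ := exists_partner hdegs' ha_mem hs'f.1
    have hs'u : s' ∉ u := by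
      intro hs'u
      have : s' ∈ u.filter (fun z => 2 ≤ H.degree z) := Finset.mem_filter.mpr ⟨hs'u, hs'f.2⟩
      rw [hfu] at this
      rcases Finset.mem_insert.mp this with rfl | h
      · exact hs's1 rfl
      · rw [Finset.mem_singleton] at h
        subst h
        have hsub : ({s1, s'} : Finset α) ⊆ u ∩ a := by
          intro x hx
          rcases Finset.mem_insert.mp hx with rfl | hx
          · exact Finset.mem_inter.mpr ⟨hs1f.1, hs1a⟩
          · rw [Finset.mem_singleton] at hx; subst hx
            exact Finset.mem_inter.mpr ⟨hs'u, hs'f.1⟩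
        have := Finset.card_le_card hsub
        rw [Finset.card_pair (Ne.symm hs's1)] at this
        have := hl u hu_mem a ha_mem (Ne.symm hau)
        omega
    have hyu : y ≠ u := fun hEq => hs'u (hEq ▸ hs'y)
    have hs'vert : s' ∈ H.verts := H.mem_verts a ha_mem s' hs'f.1
    apply bundle (X := {s'}) (D := {a, y}) (Q1 := {u}) (Q2 := ∅) 1
    · simpa using hs'vert
    · intro d hd
      rcases Finset.mem_insert.mp hd with rfl | hd
      · exact ha_mem
      · rw [Finset.mem_singleton] at hd; subst hd; exact hy_mem
    · intro d hd
      rcases Finset.mem_insert.mp hd with rfl | hd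
      · exact ⟨s', hs'f.1, Finset.mem_singleton_self s'⟩
      · rw [Finset.mem_singleton] at hd; subst hd
        exact ⟨s', hs'y, Finset.mem_singleton_self s'⟩
    · rw [Finset.card_pair hya.symm] -- need a ≠ y; hya : y ≠ a
    · intro q hq
      rw [Finset.mem_singleton] at hq; subst hq
      rw [mem_delV_edges]
      refine ⟨hu_mem, fun x hx hxX => ?_⟩
      rw [Finset.mem_singleton] at hxX; subst hxX
      exact hs'u hx
    · intro q hq
      rw [Finset.mem_singleton] at hq
      rw [hq]
      apply prune_card (t := s2)
      intro z hz hzs2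
      by_cases hzs1 : z = s1
      · subst hzs1
        apply deg_le_one (delV_edges_subset _ _) (g := a) (g' := u)
          (fun h hh hzh => (hpair1 h hh hzh).symm)
        intro hmem2
        exact (mem_delV_edges.mp hmem2).2 s' hs'f.1 (Finset.mem_singleton_self s')
      · have hznf : z ∉ u.filter (fun z => 2 ≤ H.degree z) := by
          rw [hfu]
          simp only [Finset.mem_insert, Finset.mem_singleton]
          push_neg
          exact ⟨hzs1, hzs2⟩
        have : ¬ 2 ≤ H.degree z := fun h2 => hznf (Finset.mem_filter.mpr ⟨hz, h2⟩)
        have := degree_mono (delV_edges_subset H {s'}) z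
        omega
    · simp
    · intro q hq
      simp at hq
    · simp
    · simp
    · omega
    · exact IH
  push_neg at hmid
  -- Case 5 : every vertex in every edge has degree exactly 2
  apply case5 H hu hl hcyc _ IH
  intro e he z hz
  have h1 : 2 ≤ (e.filter fun z => 2 ≤ H.degree z).card := by
    have := hpend e he
    omega
  have h2 : (e.filter fun z => 2 ≤ H.degree z).card ≠ 2 := hmid e he
  have h3 : (e.filter fun z => 2 ≤ H.degree z).card ≤ e.card := Finset.card_le_card (Finset.filter_subset _ _)
  have hcard3 : e.card = 3 := hu e he
  have hfeq : e.filter (fun z => 2 ≤ H.degree z) = e := by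
    apply Finset.eq_of_subset_of_card_le (Finset.filter_subset _ _)
    omega
  have : z ∈ e.filter (fun z => 2 ≤ H.degree z) := hfeq.symm ▸ hz
  have h2le := (Finset.mem_filter.mp this).2
  have := hdeg3 z
  omega


end FinHypergraph

open FinHypergraph in
/-- linear 3-uniform ⇒ τ_c(H) ≤ m/3. -/
theorem fvs_le_third {α : Type*} [DecidableEq α] (H : FinHypergraph α)
    (hu : H.TriUniform) (hl : H.Linear) :
    3 * H.fvsNum ≤ H.edges.card := by
  obtain ⟨S, hS, hSc⟩ := FinHypergraph.aux H.edges.card H hu hl le_rfl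
  have h1 : H.fvsNum ≤ S.card := Nat.sInf_le ⟨S, hS, rfl⟩
  omega
end

section
/- Let H=(V,E) be a 3-uniform hypergraph with n vertices, m edges, and p connected components. Then the minimum cardinality of a feedback edge set of H is at most 2m − n + p. -/
namespace HGAux

open Relation

/-- Abstract counting lemma for quotients by a finer relation. -/
lemma quot_card_le {β : Type*} [Finite β] {r r' : β → β → Prop}
    (hr : Equivalence r) (t : ℕ) (ht : 1 ≤ t) (w : Fin t → β)
    (hle : ∀ x y, r' x y → r x y)
    (hcases : ∀ x y, r x y → r' x y ∨ ((∃ i, r' x (w i)) ∧ ∃ i, r' y (w i))) :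
    Nat.card (Quot r') ≤ Nat.card (Quot r) + (t - 1) := by
  classical
  haveI : Fintype β := Fintype.ofFinite β
  haveI : Finite (Quot r') := Finite.of_surjective _ (Quot.mk_surjective (r := r'))
  haveI : Finite (Quot r) := Finite.of_surjective _ (Quot.mk_surjective (r := r))
  haveI : Fintype (Quot r') := Fintype.ofFinite _
  haveI : Fintype (Quot r) := Fintype.ofFinite _
  set T : Finset (Quot r') := Finset.image (fun i => Quot.mk r' (w i)) Finset.univ with hT
  have hmemT : ∀ x : β, (∃ i, r' x (w i)) → Quot.mk r' x ∈ T := by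
    rintro x ⟨i, hi⟩
    have : Quot.mk r' x = Quot.mk r' (w i) := Quot.sound hi
    rw [this]
    exact Finset.mem_image_of_mem _ (Finset.mem_univ i)
  set i0 : Fin t := ⟨0, ht⟩ with hi0
  set U : Finset (Quot r') := (Finset.univ \ T) ∪ {Quot.mk r' (w i0)} with hU
  set φ : Quot r' → Quot r :=
    Quot.lift (fun b => Quot.mk r b) (fun x y h => Quot.sound (hle x y h)) with hφ
  have inj : Set.InjOn φ ↑U := by
    intro u hu v hv heq
    obtain ⟨x, rfl⟩ := Quot.exists_rep u
    obtain ⟨y, rfl⟩ := Quot.exists_rep v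
    have hrxy : r x y := hr.eqvGen_iff.mp (Quot.eq.mp heq)
    rcases hcases x y hrxy with h' | ⟨hx, hy⟩
    · exact Quot.sound h'
    · have hxT := hmemT x hx
      have hyT := hmemT y hy
      have hx0 : Quot.mk r' x = Quot.mk r' (w i0) := by
        rcases Finset.mem_union.mp hu with h | h
        · exact absurd hxT (Finset.mem_sdiff.mp h).2
        · exact Finset.mem_singleton.mp h
      have hy0 : Quot.mk r' y = Quot.mk r' (w i0) := by
        rcases Finset.mem_union.mp hv with h | h
        · exact absurd hyT (Finset.mem_sdiff.mp h).2
        · exact Finset.mem_singleton.mp h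
      rw [hx0, hy0]
  have h1 : U.card ≤ Nat.card (Quot r) := by
    rw [Nat.card_eq_fintype_card, ← Finset.card_univ]
    exact Finset.card_le_card_of_injOn φ (fun _ _ => Finset.mem_univ _) inj
  have h2 : Quot.mk r' (w i0) ∈ T := Finset.mem_image_of_mem _ (Finset.mem_univ i0)
  have h3 : U.card = (Finset.univ \ T).card + 1 := by
    rw [hU, Finset.card_union_of_disjoint, Finset.card_singleton]
    simp only [Finset.disjoint_singleton_right, Finset.mem_sdiff]
    exact fun h => h.2 h2
  have h4 : (Finset.univ \ T).card = Fintype.card (Quot r') - T.card := by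
    rw [Finset.card_sdiff_of_subset (Finset.subset_univ _), Finset.card_univ]
  have h5 : T.card ≤ t := le_trans Finset.card_image_le (by simp)
  have h6 : T.card ≤ Fintype.card (Quot r') := by
    rw [← Finset.card_univ]; exact Finset.card_le_card (Finset.subset_univ _)
  have h7 : Nat.card (Quot r') = Fintype.card (Quot r') := Nat.card_eq_fintype_card
  have h8 : Nat.card (Quot r) = Fintype.card (Quot r) := Nat.card_eq_fintype_card
  omega

end HGAux

/-! new material -/
namespace FinHypergraph
variable {α : Type*} [DecidableEq α]

lemma edges_delE (H : FinHypergraph α) (A : Finset (Finset α)) :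
    (H.delE A).edges = H.edges \ A := rfl

lemma isFES_edges (H : FinHypergraph α) : H.IsFES H.edges := by
  refine ⟨subset_rfl, ?_⟩
  rintro ⟨k, v, e, hk, hv, he, hmem, hinc⟩
  have h0 := hmem 0
  rw [edges_delE, Finset.sdiff_self] at h0
  exact absurd h0 (Finset.notMem_empty _)

lemma fesNum_le {H : FinHypergraph α} {A : Finset (Finset α)} (h : H.IsFES A) :
    H.fesNum ≤ A.card := Nat.sInf_le ⟨A, h, rfl⟩

lemma exists_min_fes (H : FinHypergraph α) : ∃ A, H.IsFES A ∧ A.card = H.fesNum :=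
  Nat.sInf_mem (⟨H.edges.card, H.edges, H.isFES_edges, rfl⟩ :
    Set.Nonempty {n | ∃ A, H.IsFES A ∧ A.card = n})

lemma connRel_refl (H : FinHypergraph α) (x : α) : H.connRel x x := Relation.ReflTransGen.refl

lemma connRel_symm (H : FinHypergraph α) : Symmetric H.connRel :=
  haveI : Std.Symm (fun a b => ∃ e ∈ H.edges, a ∈ e ∧ b ∈ e) :=
    ⟨fun a b ⟨e, he, ha, hb⟩ => ⟨e, he, hb, ha⟩⟩
  fun x y h => Relation.ReflTransGen.stdSymm.symm x y h

lemma connRel_trans (H : FinHypergraph α) {x y z : α} (h1 : H.connRel x y)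
    (h2 : H.connRel y z) : H.connRel x z := h1.trans h2

lemma connRel_single {H : FinHypergraph α} {f : Finset α} (hf : f ∈ H.edges) {a b : α}
    (ha : a ∈ f) (hb : b ∈ f) : H.connRel a b :=
  Relation.ReflTransGen.single ⟨f, hf, ha, hb⟩

lemma connRel_delE_mono {H : FinHypergraph α} {A : Finset (Finset α)} {x y : α}
    (h : (H.delE A).connRel x y) : H.connRel x y :=
  Relation.ReflTransGen.mono
    (fun a b ⟨e, he, ha, hb⟩ => ⟨e, (Finset.mem_sdiff.mp he).1, ha, hb⟩) _ _ h

lemma connRel_delE_cases (H : FinHypergraph α) (f : Finset α) {x y : α}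
    (h : H.connRel x y) :
    (H.delE {f}).connRel x y ∨
      ((∃ s ∈ f, (H.delE {f}).connRel x s) ∧ ∃ s ∈ f, (H.delE {f}).connRel y s) := by
  induction h with
  | refl => exact Or.inl (connRel_refl _ _)
  | @tail b c hxb hbc ih =>
    obtain ⟨e, he, hb, hc⟩ := hbc
    by_cases hef : e = f
    · subst hef
      right
      rcases ih with h' | ⟨hx, _⟩
      · exact ⟨⟨_, hb, h'⟩, ⟨_, hc, connRel_refl _ _⟩⟩
      · exact ⟨hx, ⟨_, hc, connRel_refl _ _⟩⟩
    · have hmem : e ∈ (H.delE {f}).edges :=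
        Finset.mem_sdiff.mpr ⟨he, by simp [hef]⟩
      have step : (H.delE {f}).connRel b c := connRel_single hmem hb hc
      rcases ih with h' | ⟨hx, hy⟩
      · exact Or.inl (h'.trans step)
      · obtain ⟨s, hs, hbs⟩ := hy
        exact Or.inr ⟨hx, ⟨s, hs, (connRel_symm _ step).trans hbs⟩⟩

end FinHypergraph

namespace FinHypergraph
variable {α : Type*} [DecidableEq α]

lemma connRel_equiv_sub (H : FinHypergraph α) :
    Equivalence (fun x y : {a // a ∈ H.verts} => H.connRel x y) :=
  ⟨fun x => connRel_refl _ _, fun h => connRel_symm _ h, fun h1 h2 => h1.trans h2⟩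

/-- Key component bound: removing one edge, with a "hub" family `w` of vertices of `f`
such that every vertex of `f` is `delE`-connected to some `w i`. -/
lemma numComponents_delE_le_aux (H : FinHypergraph α) {f : Finset α} (hf : f ∈ H.edges)
    (t : ℕ) (ht : 1 ≤ t) (w : Fin t → α) (hwv : ∀ i, w i ∈ H.verts)
    (hhub : ∀ s ∈ f, ∃ i, (H.delE {f}).connRel s (w i)) :
    (H.delE {f}).numComponents ≤ H.numComponents + (t - 1) := by
  have key := HGAux.quot_card_le (β := {a // a ∈ H.verts})
    (r := fun x y => H.connRel x y) (r' := fun x y => (H.delE {f}).connRel x y)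
    (H.connRel_equiv_sub) t ht (fun i => ⟨w i, hwv i⟩)
    (fun x y h => connRel_delE_mono h) ?_
  · exact key
  · rintro ⟨x, hx⟩ ⟨y, hy⟩ hxy
    rcases H.connRel_delE_cases f hxy with h' | ⟨⟨s, hs, hxs⟩, ⟨u, hu, hyu⟩⟩
    · exact Or.inl h'
    · obtain ⟨i, hi⟩ := hhub s hs
      obtain ⟨j, hj⟩ := hhub u hu
      exact Or.inr ⟨⟨i, hxs.trans hi⟩, ⟨j, hyu.trans hj⟩⟩

lemma numComponents_delE_le_two (H : FinHypergraph α) {f : Finset α} (hf : f ∈ H.edges)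
    (h3 : f.card = 3) :
    (H.delE {f}).numComponents ≤ H.numComponents + 2 := by
  obtain ⟨a, b, c, hab, hac, hbc, rfl⟩ := Finset.card_eq_three.mp h3
  have hmem : ∀ x ∈ ({a, b, c} : Finset α), x ∈ H.verts := H.mem_verts _ hf
  have := H.numComponents_delE_le_aux hf 3 (by norm_num) ![a, b, c]
    (fun i => by fin_cases i <;> apply hmem <;> simp) ?_
  · simpa using this
  · intro s hs
    simp only [Finset.mem_insert, Finset.mem_singleton] at hs
    rcases hs with rfl | rfl | rfl
    · exact ⟨0, connRel_refl _ _⟩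
    · exact ⟨1, connRel_refl _ _⟩
    · exact ⟨2, connRel_refl _ _⟩

end FinHypergraph

namespace FinHypergraph
variable {α : Type*} [DecidableEq α]

lemma cycle_path (H : FinHypergraph α) {k : ℕ} {v : ZMod k → α} {e : ZMod k → Finset α}
    (hc : H.IsCycle k v e) : (H.delE {e 0}).connRel (v 1) (v 0) := by
  obtain ⟨hk, hv, he, hmem, hinc⟩ := hc
  haveI : NeZero k := ⟨by omega⟩
  have main : ∀ j : ℕ, 1 ≤ j → j ≤ k → (H.delE {e 0}).connRel (v 1) (v (j : ZMod k)) := by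
    intro j
    induction j with
    | zero => omega
    | succ n ih =>
      intro _ hn1
      by_cases hn0 : n = 0
      · subst hn0
        have h01 : ((0 + 1 : ℕ) : ZMod k) = 1 := by norm_num
        rw [h01]
        exact connRel_refl _ _
      · have hn : 1 ≤ n := by omega
        have hnk : n < k := by omega
        have hne : (n : ZMod k) ≠ 0 := by
          intro h
          have := ZMod.val_cast_of_lt hnk
          rw [h, ZMod.val_zero] at this
          omega
        have hene : e (n : ZMod k) ≠ e 0 := fun h => hne (he h)
        have hmem' : e (n : ZMod k) ∈ (H.delE {e 0}).edges :=
          Finset.mem_sdiff.mpr ⟨hmem _, by simp [hene]⟩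
        have step : (H.delE {e 0}).connRel (v (n : ZMod k)) (v ((n : ZMod k) + 1)) :=
          connRel_single hmem' (hinc _).1 (hinc _).2
        have : ((n + 1 : ℕ) : ZMod k) = (n : ZMod k) + 1 := by push_cast; ring
        rw [this]
        exact (ih hn (by omega)).trans step
  have := main k (by omega) le_rfl
  rwa [ZMod.natCast_self] at this

lemma numComponents_delE_le_one (H : FinHypergraph α) (hu : H.TriUniform)
    {k : ℕ} {v : ZMod k → α} {e : ZMod k → Finset α} (hc : H.IsCycle k v e) :
    (H.delE {e 0}).numComponents ≤ H.numComponents + 1 := by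
  obtain ⟨hk, hv, he, hmem, hinc⟩ := hc
  haveI : NeZero k := ⟨by omega⟩
  have hf : e 0 ∈ H.edges := hmem 0
  have h3 : (e 0).card = 3 := hu _ hf
  have hv0 : v 0 ∈ e 0 := (hinc 0).1
  have hv1 : v 1 ∈ e 0 := by have := (hinc 0).2; rwa [zero_add] at this
  have hv01 : v 0 ≠ v 1 := by
    intro h
    have h01 : (0 : ZMod k) = 1 := hv h
    haveI : Fact (1 < k) := ⟨by omega⟩
    have hval : (0 : ZMod k).val = (1 : ZMod k).val := by rw [h01]
    rw [ZMod.val_zero, ZMod.val_one] at hval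
    omega
  -- third vertex
  have hsub : ({v 0, v 1} : Finset α) ⊆ e 0 := by
    intro x hx; rcases Finset.mem_insert.mp hx with rfl | hx
    · exact hv0
    · rw [Finset.mem_singleton.mp hx]; exact hv1
  have hcard2 : ({v 0, v 1} : Finset α).card = 2 := by
    rw [Finset.card_insert_of_notMem (by simp [hv01]), Finset.card_singleton]
  have hcard1 : (e 0 \ {v 0, v 1}).card = 1 := by
    rw [Finset.card_sdiff_of_subset hsub, h3, hcard2]
  obtain ⟨c3, hc3⟩ := Finset.card_eq_one.mp hcard1
  have hc3f : c3 ∈ e 0 := by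
    have : c3 ∈ e 0 \ {v 0, v 1} := by rw [hc3]; exact Finset.mem_singleton_self _
    exact (Finset.mem_sdiff.mp this).1
  have hpath : (H.delE {e 0}).connRel (v 1) (v 0) :=
    H.cycle_path ⟨hk, hv, he, hmem, hinc⟩
  have := H.numComponents_delE_le_aux hf 2 (by norm_num) ![v 0, c3]
    (fun i => by
      fin_cases i
      · exact H.mem_verts _ hf _ hv0
      · exact H.mem_verts _ hf _ hc3f) ?_
  · simpa using this
  · intro s hs
    by_cases hs0 : s = v 0
    · subst hs0; exact ⟨0, connRel_refl _ _⟩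
    by_cases hs1 : s = v 1
    · subst hs1; exact ⟨0, hpath⟩
    · have : s ∈ e 0 \ {v 0, v 1} := by
        rw [Finset.mem_sdiff]
        exact ⟨hs, by simp [hs0, hs1]⟩
      rw [hc3, Finset.mem_singleton] at this
      subst this
      exact ⟨1, connRel_refl _ _⟩

lemma fesNum_delE_le (H : FinHypergraph α) {f : Finset α} (hf : f ∈ H.edges) :
    H.fesNum ≤ (H.delE {f}).fesNum + 1 := by
  obtain ⟨A, ⟨hA1, hA2⟩, hcard⟩ := (H.delE {f}).exists_min_fes
  have hFES : H.IsFES (insert f A) := by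
    constructor
    · exact Finset.insert_subset hf (hA1.trans (by rw [edges_delE]; exact Finset.sdiff_subset))
    · intro hcyc
      apply hA2
      refine hasCycle_mono ?_ hcyc
      intro x hx
      rw [edges_delE] at hx ⊢
      rw [edges_delE]
      simp only [Finset.mem_sdiff, Finset.mem_insert, Finset.mem_singleton] at *
      tauto
  calc H.fesNum ≤ (insert f A).card := fesNum_le hFES
    _ ≤ A.card + 1 := Finset.card_insert_le _ _
    _ = (H.delE {f}).fesNum + 1 := by rw [hcard]

lemma numComponents_of_edges_empty (H : FinHypergraph α) (h : H.edges = ∅) :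
    H.numComponents = H.verts.card := by
  have heq : ∀ x y : α, H.connRel x y → x = y := by
    intro x y hxy
    induction hxy with
    | refl => rfl
    | tail _ hbc ih =>
      obtain ⟨e, he, _, _⟩ := hbc
      rw [h] at he
      exact absurd he (Finset.notMem_empty _)
  have hinj : Function.Injective
      (Quot.mk fun x y : {a // a ∈ H.verts} => H.connRel x y) := by
    intro x y hxy
    have h' := Quot.eq.mp hxy
    clear hxy
    induction h' with
    | rel a b hab => exact Subtype.ext (heq _ _ hab)
    | refl => rfl
    | symm a b _ ih => exact ih.symm
    | trans a b c _ _ ih1 ih2 => exact ih1.trans ih2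
  have hbij : Function.Bijective
      (Quot.mk fun x y : {a // a ∈ H.verts} => H.connRel x y) :=
    ⟨hinj, Quot.mk_surjective⟩
  unfold numComponents
  rw [← Nat.card_eq_of_bijective _ hbij, Nat.card_eq_fintype_card, Fintype.card_coe]

end FinHypergraph

namespace FinHypergraph
variable {α : Type*} [DecidableEq α]

lemma fesNum_eq_zero (H : FinHypergraph α) (h : ¬ H.HasCycle) : H.fesNum = 0 := by
  have hFES : H.IsFES ∅ :=
    ⟨Finset.empty_subset _,
      fun hc => h (hasCycle_mono (by rw [edges_delE, Finset.sdiff_empty]) hc)⟩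
  have := fesNum_le hFES
  simpa using this

lemma key : ∀ (m : ℕ) (H : FinHypergraph α), H.TriUniform → H.edges.card = m →
    (H.fesNum : ℤ) + H.verts.card ≤ 2 * m + H.numComponents := by
  intro m
  induction m using Nat.strong_induction_on with
  | _ m IH =>
    intro H hu hm
    by_cases hm0 : m = 0
    · subst hm0
      have he : H.edges = ∅ := Finset.card_eq_zero.mp hm
      have h1 : H.fesNum = 0 := H.fesNum_eq_zero (by
        rintro ⟨k, v, e, hk, hv, hE, hmem, hinc⟩
        rw [he] at hmem
        exact absurd (hmem 0) (Finset.notMem_empty _))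
      rw [h1, H.numComponents_of_edges_empty he]
      push_cast
      linarith
    · by_cases hcyc : H.HasCycle
      · obtain ⟨k, v, e, hc⟩ := hcyc
        have hf : e 0 ∈ H.edges := hc.2.2.2.1 0
        set H' := H.delE {e 0} with hH'
        have hcard' : H'.edges.card = m - 1 := by
          rw [hH', edges_delE,
            Finset.card_sdiff_of_subset (Finset.singleton_subset_iff.mpr hf),
            Finset.card_singleton, hm]
        have hu' : H'.TriUniform := fun g hg => hu g (Finset.mem_sdiff.mp hg).1
        have hIH := IH (m - 1) (by omega) H' hu' hcard'
        have h1 : H.fesNum ≤ H'.fesNum + 1 := H.fesNum_delE_le hf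
        have h2 : H'.numComponents ≤ H.numComponents + 1 :=
          H.numComponents_delE_le_one hu hc
        have hverts : H'.verts = H.verts := rfl
        rw [hverts] at hIH
        have c1 : (H.fesNum : ℤ) ≤ (H'.fesNum : ℤ) + 1 := by exact_mod_cast h1
        have c2 : (H'.numComponents : ℤ) ≤ (H.numComponents : ℤ) + 1 := by
          exact_mod_cast h2
        have c3 : ((m - 1 : ℕ) : ℤ) = (m : ℤ) - 1 := by omega
        rw [c3] at hIH
        linarith
      · obtain ⟨f, hf⟩ := Finset.card_pos.mp (by omega : 0 < H.edges.card)
        set H' := H.delE {f} with hH'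
        have hcard' : H'.edges.card = m - 1 := by
          rw [hH', edges_delE,
            Finset.card_sdiff_of_subset (Finset.singleton_subset_iff.mpr hf),
            Finset.card_singleton, hm]
        have hu' : H'.TriUniform := fun g hg => hu g (Finset.mem_sdiff.mp hg).1
        have hIH := IH (m - 1) (by omega) H' hu' hcard'
        have h1 : H.fesNum = 0 := H.fesNum_eq_zero hcyc
        have h2 : H'.numComponents ≤ H.numComponents + 2 :=
          H.numComponents_delE_le_two hf (hu f hf)
        have hverts : H'.verts = H.verts := rfl
        rw [hverts] at hIH
        have c2 : (H'.numComponents : ℤ) ≤ (H.numComponents : ℤ) + 2 := by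
          exact_mod_cast h2
        have c3 : ((m - 1 : ℕ) : ℤ) = (m : ℤ) - 1 := by omega
        rw [c3] at hIH
        have c4 : (0 : ℤ) ≤ (H'.fesNum : ℤ) := Int.natCast_nonneg _
        rw [h1]
        push_cast
        linarith

end FinHypergraph


open FinHypergraph in
/-- 3-uniform ⇒ τ_c'(H) ≤ 2m - n + p. -/
theorem fes_le {α : Type*} [DecidableEq α] (H : FinHypergraph α)
    (hu : H.TriUniform) :
    (H.fesNum : ℤ) ≤ 2 * H.edges.card - H.verts.card + H.numComponents := by
  have := FinHypergraph.key H.edges.card H hu rfl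
  linarith
end

section
/- Let H be a 3-uniform hypergraph with m edges such that τ_c(H) = m/2. Then every vertex of H has degree at most 2. -/
namespace FinHypergraph

variable {α : Type*} [DecidableEq α]

lemma hasCycle_congr {H1 H2 : FinHypergraph α} (h : H1.edges = H2.edges) :
    H1.HasCycle → H2.HasCycle := by
  rintro ⟨k, v, e, hk, hv, he, hed, hinc⟩
  exact ⟨k, v, e, hk, hv, he, fun i => h ▸ hed i, hinc⟩

lemma isFVS_verts (H : FinHypergraph α) : H.IsFVS H.verts := by
  refine ⟨le_refl _, ?_⟩
  rintro ⟨k, v, e, hk, hv, he, hed, hinc⟩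
  have h0 := hed 0
  simp only [delV, Finset.mem_filter] at h0
  exact h0.2 (v 0) (hinc 0).1 (H.mem_verts _ h0.1 _ (hinc 0).1)

lemma fvsNum_nonempty (H : FinHypergraph α) :
    {n | ∃ S, H.IsFVS S ∧ S.card = n}.Nonempty :=
  ⟨H.verts.card, H.verts, H.isFVS_verts, rfl⟩

lemma fvsNum_spec (H : FinHypergraph α) :
    ∃ S, H.IsFVS S ∧ S.card = H.fvsNum :=
  Nat.sInf_mem H.fvsNum_nonempty

lemma fvsNum_le {H : FinHypergraph α} {S : Finset α} (h : H.IsFVS S) :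
    H.fvsNum ≤ S.card :=
  Nat.sInf_le ⟨S, h, rfl⟩

lemma delV_delV_edges (H : FinHypergraph α) (w : α) (S : Finset α) :
    (H.delV (insert w S)).edges = ((H.delV {w}).delV S).edges := by
  simp only [delV, Finset.filter_filter]
  apply Finset.filter_congr
  intro e _
  simp only [Finset.mem_insert, Finset.mem_singleton]
  constructor
  · intro h; exact ⟨fun x hx hxw => h x hx (Or.inl hxw),
      fun x hx hxS => h x hx (Or.inr hxS)⟩
  · rintro ⟨h1, h2⟩ x hx (hxw | hxS)
    · exact h1 x hx hxw
    · exact h2 x hx hxS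

lemma fvsNum_le_delV (H : FinHypergraph α) {w : α} (hw : w ∈ H.verts) :
    H.fvsNum ≤ (H.delV {w}).fvsNum + 1 := by
  obtain ⟨S', ⟨hS'sub, hS'nc⟩, hS'card⟩ := (H.delV {w}).fvsNum_spec
  have hsub : S' ⊆ H.verts := hS'sub.trans Finset.sdiff_subset
  have hFVS : H.IsFVS (insert w S') := by
    refine ⟨Finset.insert_subset hw hsub, fun hc => hS'nc ?_⟩
    exact hasCycle_congr (H.delV_delV_edges w S') hc
  calc H.fvsNum ≤ (insert w S').card := fvsNum_le hFVS
    _ ≤ S'.card + 1 := Finset.card_insert_le _ _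
    _ = (H.delV {w}).fvsNum + 1 := by rw [hS'card]

lemma two_fvsNum_le_aux : ∀ n (H : FinHypergraph α), H.edges.card = n →
    2 * H.fvsNum ≤ n := by
  intro n
  induction n using Nat.strong_induction_on with
  | _ n ih =>
    intro H hn
    by_cases hc : H.HasCycle
    · obtain ⟨k, v, e, hk, hv, he, hed, hinc⟩ := hc
      haveI : Fact (1 < k) := ⟨hk⟩
      set w := v 0 with hw
      have hne : e 0 ≠ e (-1) := by
        intro h
        have : (0 : ZMod k) = -1 := he h
        have : (1 : ZMod k) = 0 := by
          have := congrArg (· + 1) this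
          simpa using this.symm
        exact one_ne_zero this
      have he0 : e 0 ∈ H.edges := hed 0
      have hem : e (-1) ∈ H.edges := hed (-1)
      have hw0 : w ∈ e 0 := (hinc 0).1
      have hwm : w ∈ e (-1) := by
        have := (hinc (-1)).2
        rwa [neg_add_cancel] at this
      have hwin : w ∈ H.verts := H.mem_verts _ he0 _ hw0
      have hsub : (H.delV {w}).edges ⊆ (H.edges.erase (e 0)).erase (e (-1)) := by
        intro f hf
        simp only [delV, Finset.mem_filter, Finset.mem_singleton] at hf
        obtain ⟨hfE, hfw⟩ := hf
        refine Finset.mem_erase.mpr ⟨?_, Finset.mem_erase.mpr ⟨?_, hfE⟩⟩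
        · intro h; exact hfw w (h ▸ hwm) rfl
        · intro h; exact hfw w (h ▸ hw0) rfl
      have hmem : e (-1) ∈ H.edges.erase (e 0) := Finset.mem_erase.mpr ⟨hne.symm, hem⟩
      have hc1 : (H.edges.erase (e 0)).card = n - 1 := by
        rw [Finset.card_erase_of_mem he0, hn]
      have hc2 : ((H.edges.erase (e 0)).erase (e (-1))).card = n - 1 - 1 := by
        rw [Finset.card_erase_of_mem hmem, hc1]
      have hn2 : 2 ≤ n := by
        have : ({e 0, e (-1)} : Finset (Finset α)) ⊆ H.edges := by
          intro f hf
          simp only [Finset.mem_insert, Finset.mem_singleton] at hf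
          rcases hf with rfl | rfl
          · exact he0
          · exact hem
        have h2 := Finset.card_le_card this
        rw [Finset.card_pair hne, hn] at h2
        exact h2
      have hcard : (H.delV {w}).edges.card ≤ n - 2 := by
        have := Finset.card_le_card hsub
        omega
      have hlt : (H.delV {w}).edges.card < n := by omega
      have hih := ih _ hlt (H.delV {w}) rfl
      have hkey := H.fvsNum_le_delV hwin
      omega
    · have h0 : H.IsFVS ∅ := by
        refine ⟨Finset.empty_subset _, fun hcyc => hc ?_⟩
        refine hasCycle_congr (H1 := H.delV ∅) ?_ hcyc
        simp [delV]
      have := fvsNum_le h0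
      simp at this
      omega

lemma two_fvsNum_le (H : FinHypergraph α) : 2 * H.fvsNum ≤ H.edges.card :=
  two_fvsNum_le_aux _ H rfl

lemma delV_card (H : FinHypergraph α) (v : α) :
    (H.delV {v}).edges.card + H.degree v = H.edges.card := by
  have : (H.delV {v}).edges = H.edges.filter (fun e => ¬ v ∈ e) := by
    apply Finset.filter_congr
    intro e _
    simp only [Finset.mem_singleton]
    constructor
    · intro h hv; exact h v hv rfl
    · intro h x hx hxv; exact h (hxv ▸ hx)
  rw [this, degree, Finset.filter_not, Finset.card_sdiff_of_subset (Finset.filter_subset _ _)]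
  have := Finset.card_filter_le H.edges (fun e => v ∈ e)
  omega

end FinHypergraph

open FinHypergraph in
/-- 3-uniform with τ_c(H) = m/2 ⇒ max degree ≤ 2. -/
theorem degree_le_two_of_fvs_eq_half {α : Type*} [DecidableEq α]
    (H : FinHypergraph α) (hu : H.TriUniform)
    (heq : 2 * H.fvsNum = H.edges.card) :
    ∀ v, H.degree v ≤ 2 := by
  intro v
  by_contra h
  push_neg at h
  have hdeg : 3 ≤ H.degree v := h
  have hvmem : v ∈ H.verts := by
    have hpos : 0 < H.degree v := by omega
    obtain ⟨e, he⟩ := Finset.card_pos.mp hpos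
    rw [Finset.mem_filter] at he
    exact H.mem_verts e he.1 v he.2
  have h1 := H.fvsNum_le_delV hvmem
  have h2 := (H.delV {v}).two_fvsNum_le
  have h3 := H.delV_card v
  omega
end
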